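/- arXiv:2003.01292 — 4 statements merged into one kernel-verified Lean document; each statement's English description precedes it below -/
import Mathlib

section
/- Let m ≤ n and let A = S·D·T, where S ∈ GL_m(Z_h), T ∈ GL_n(Z_h), and D ∈ Z_h^{m×n} is the matrix whose (c,c) entry equals ∏_{i=1}^t p_i^{α_{ic}} for c = 1,…,m and whose other entries are 0, with exponents satisfying 0 ≤ α_{i1} ≤ α_{i2} ≤ … ≤ α_{im} ≤ s_i for each i = 1,…,t. Then the McCoy rank of A equals the largest c such that (α_{1c}, α_{2c}, …, α_{tc}) = (0,…,0) (and rk(A) = 0 if no such c exists). -/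
open scoped Matrix BigOperators

namespace Paper

def HasRightInv {R : Type*} [CommRing R] {m n : ℕ} (A : Matrix (Fin m) (Fin n) R) : Prop :=
  ∃ B : Matrix (Fin n) (Fin m) R, A * B = 1

def rowSpace {R : Type*} [CommRing R] {m n : ℕ} (A : Matrix (Fin m) (Fin n) R) :
    Submodule R (Fin n → R) :=
  Submodule.span R (Set.range fun i => A i)

def IsSubspaceOfDim {R : Type*} [CommRing R] (n m : ℕ) (V : Submodule R (Fin n → R)) : Prop :=
  ∃ A : Matrix (Fin m) (Fin n) R, HasRightInv A ∧ rowSpace A = V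

def Unimodular {R : Type*} [CommRing R] {m n : ℕ} (v : Fin m → Fin n → R) : Prop :=
  HasRightInv (Matrix.of v)

noncomputable def sdim {R : Type*} [CommRing R] {n : ℕ} (V : Submodule R (Fin n → R)) : ℕ :=
  sSup {m | ∃ v : Fin m → Fin n → R, (∀ i, v i ∈ V) ∧ Unimodular v}

def minorsIdeal {R : Type*} [CommRing R] {m n : ℕ} (A : Matrix (Fin m) (Fin n) R) (k : ℕ) :
    Ideal R :=
  Ideal.span {d | ∃ (f : Fin k → Fin m) (g : Fin k → Fin n), d = (A.submatrix f g).det}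

noncomputable def mccoyRank {R : Type*} [CommRing R] {m n : ℕ} (A : Matrix (Fin m) (Fin n) R) : ℕ :=
  sSup {k | ∀ x : R, (∀ y ∈ minorsIdeal A k, x * y = 0) → x = 0}

noncomputable def innerRank {R : Type*} [CommRing R] {m n : ℕ} (A : Matrix (Fin m) (Fin n) R) : ℕ :=
  sInf {r | ∃ (B : Matrix (Fin m) (Fin r) R) (C : Matrix (Fin r) (Fin n) R), A = B * C}

noncomputable def joinDim {R : Type*} [CommRing R] {n : ℕ} (A B : Submodule R (Fin n → R)) : ℕ :=
  sInf {d | ∃ W : Submodule R (Fin n → R), IsSubspaceOfDim n d W ∧ A ≤ W ∧ B ≤ W}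

def mapSub {R S : Type*} [CommRing R] [CommRing S] (f : R →+* S) {n : ℕ}
    (V : Submodule R (Fin n → R)) : Submodule S (Fin n → S) :=
  Submodule.span S ((fun v (j : Fin n) => f (v j)) '' (V : Set (Fin n → R)))

def dualSub {R : Type*} [CommRing R] {n : ℕ} (V : Submodule R (Fin n → R)) :
    Submodule R (Fin n → R) where
  carrier := {y | ∀ x ∈ V, ∑ j, y j * x j = 0}
  add_mem' := by
    intro a b ha hb
    intro x hx
    have h1 : ∑ j, (a + b) j * x j = (∑ j, a j * x j) + ∑ j, b j * x j := by
      rw [← Finset.sum_add_distrib]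
      exact Finset.sum_congr rfl fun j _ => by simp [add_mul]
    simp only [Set.mem_setOf_eq] at ha hb
    rw [h1, ha x hx, hb x hx, add_zero]
  zero_mem' := by
    intro x hx
    simp
  smul_mem' := by
    intro c a ha
    intro x hx
    simp only [Set.mem_setOf_eq] at ha
    have h1 : ∑ j, (c • a) j * x j = c * ∑ j, a j * x j := by
      rw [Finset.mul_sum]
      exact Finset.sum_congr rfl fun j _ => by simp [mul_assoc]
    rw [h1, ha x hx, mul_zero]

def grassmannGraph (R : Type*) [CommRing R] (m n r : ℕ) :
    SimpleGraph {V : Submodule R (Fin n → R) // IsSubspaceOfDim n m V} where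
  Adj A B := A ≠ B ∧ ((m : ℤ) - (r : ℤ) < (sdim (A.1 ⊓ B.1) : ℤ))
  symm := by
    constructor
    intro A B hAB
    refine ⟨hAB.1.symm, ?_⟩
    rw [inf_comm]
    exact hAB.2
  loopless := by
    constructor
    intro A hA
    exact hA.1 rfl

noncomputable def cliqueNum {V : Type*} (G : SimpleGraph V) : ℕ :=
  sSup {c | ∃ S : Set V, G.IsClique S ∧ S.ncard = c}

noncomputable def indepNum {V : Type*} (G : SimpleGraph V) : ℕ :=
  sSup {c | ∃ S : Set V, (S.Pairwise fun a b => ¬ G.Adj a b) ∧ S.ncard = c}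

noncomputable def gaussQ (q a b : ℕ) : ℚ :=
  ∏ j ∈ Finset.range b, ((q : ℚ) ^ (a - j) - 1) / ((q : ℚ) ^ (b - j) - 1)


lemma det_mul_mem {R : Type*} [CommRing R] {k b : ℕ} (P : Matrix (Fin k) (Fin b) R)
    (Q : Matrix (Fin b) (Fin k) R) (I : Ideal R)
    (hQ : ∀ φ : Fin k → Fin b, (Q.submatrix φ id).det ∈ I) : (P * Q).det ∈ I := by
  classical
  have h0 : (P * Q) = Matrix.of (fun i => ∑ r : Fin b, P i r • Q r) := by
    ext i j; simp [Matrix.mul_apply, Finset.sum_apply]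
  have h1 : (P * Q).det = Matrix.detRowAlternating (fun i : Fin k => ∑ r : Fin b, P i r • Q r) := by
    rw [h0]; rfl
  have h2 : Matrix.detRowAlternating (fun i : Fin k => ∑ r : Fin b, P i r • Q r)
      = ∑ φ : Fin k → Fin b, Matrix.detRowAlternating (fun i => P i (φ i) • Q (φ i)) :=
    (Matrix.detRowAlternating.toMultilinearMap).map_sum (fun i r => P i r • Q r)
  rw [h1, h2]
  apply Submodule.sum_mem
  intro φ _
  have h3 : Matrix.detRowAlternating (fun i : Fin k => P i (φ i) • Q (φ i))
      = (∏ i, P i (φ i)) • Matrix.detRowAlternating (fun i : Fin k => Q (φ i)) :=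
    MultilinearMap.map_smul_univ _ _ _
  rw [h3, smul_eq_mul]
  exact I.mul_mem_left _ (hQ φ)

lemma minorsIdeal_mul_le_right {R : Type*} [CommRing R] {a b c k : ℕ}
    (M : Matrix (Fin a) (Fin b) R) (N : Matrix (Fin b) (Fin c) R) :
    minorsIdeal (M * N) k ≤ minorsIdeal N k := by
  rw [minorsIdeal, Ideal.span_le]
  rintro x ⟨f, g, rfl⟩
  have h1 : (M * N).submatrix f g = (M.submatrix f id) * (N.submatrix id g) :=
    Matrix.submatrix_mul M N f id g Function.bijective_id
  rw [SetLike.mem_coe, h1]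
  exact det_mul_mem _ _ _ fun φ =>
    Ideal.subset_span ⟨φ, g, by rw [Matrix.submatrix_submatrix]; rfl⟩

lemma minorsIdeal_mul_le_left {R : Type*} [CommRing R] {a b c k : ℕ}
    (M : Matrix (Fin a) (Fin b) R) (N : Matrix (Fin b) (Fin c) R) :
    minorsIdeal (M * N) k ≤ minorsIdeal M k := by
  rw [minorsIdeal, Ideal.span_le]
  rintro x ⟨f, g, rfl⟩
  have h1 : ((M * N).submatrix f g).det = ((Nᵀ * Mᵀ).submatrix g f).det := by
    rw [← Matrix.det_transpose, Matrix.transpose_submatrix, Matrix.transpose_mul]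
  rw [SetLike.mem_coe, h1]
  have h2 : (Nᵀ * Mᵀ).submatrix g f = (Nᵀ.submatrix g id) * (Mᵀ.submatrix id f) :=
    Matrix.submatrix_mul Nᵀ Mᵀ g id f Function.bijective_id
  rw [h2]
  refine det_mul_mem _ _ _ fun φ => Ideal.subset_span ⟨f, φ, ?_⟩
  rw [Matrix.submatrix_submatrix, ← Matrix.det_transpose, Matrix.transpose_submatrix]
  rfl

lemma strictMono_le_val {k m : ℕ} {v : Fin k → Fin m} (hv : StrictMono v) :
    ∀ j : ℕ, ∀ c : Fin k, (c : ℕ) = j → j ≤ (v c : ℕ) := by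
  intro j
  induction j with
  | zero => intro c _; exact Nat.zero_le _
  | succ j ih =>
    intro c hc
    have hj : j < k := by omega
    have h1 : (⟨j, hj⟩ : Fin k) < c := by simp [Fin.lt_def, hc]
    have h2 := hv h1
    have h3 := ih ⟨j, hj⟩ rfl
    have := Fin.lt_def.mp h2
    omega

lemma prod_sorted_dvd {k m : ℕ} (hk : k ≤ m) (d : Fin m → ℕ)
    (hdvd : ∀ c c' : Fin m, c ≤ c' → d c ∣ d c')
    (f : Fin k → Fin m) (hf : Function.Injective f) :
    (∏ c : Fin k, d (Fin.castLE hk c)) ∣ ∏ i, d (f i) := by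
  classical
  have hcard : (Finset.univ.image f).card = k := by
    rw [Finset.card_image_of_injective _ hf, Finset.card_univ, Fintype.card_fin]
  set s := Finset.univ.image f with hs
  set e := s.orderEmbOfFin hcard with he
  have h1 : ∏ i, d (f i) = ∏ x ∈ s, d x := by
    rw [hs, Finset.prod_image (fun a _ b _ hab => hf hab)]
  have h2 : s = Finset.image (⇑e) Finset.univ := by
    apply Finset.coe_injective
    conv_rhs => rw [Finset.coe_image, Finset.coe_univ, Set.image_univ]
    exact (Finset.range_orderEmbOfFin s hcard).symm
  have h3 : ∏ x ∈ s, d x = ∏ c : Fin k, d (e c) := by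
    conv_lhs => rw [h2]
    rw [Finset.prod_image (fun a _ b _ hab => e.injective hab)]
  rw [h1, h3]
  apply Finset.prod_dvd_prod_of_dvd
  intro c _
  apply hdvd
  have := strictMono_le_val e.strictMono (c : ℕ) c rfl
  simpa [Fin.le_def] using this


lemma minors_eq_bot {R : Type*} [CommRing R] {m n k : ℕ} (hk : m < k)
    (D : Matrix (Fin m) (Fin n) R) : minorsIdeal D k = ⊥ := by
  rw [minorsIdeal, Ideal.span_eq_bot]
  rintro x ⟨f, g, rfl⟩
  have hf : ¬ Function.Injective f := fun hinj => by
    have := Fintype.card_le_of_injective f hinj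
    simp only [Fintype.card_fin] at this
    omega
  obtain ⟨i, j, hij, hne⟩ := Function.not_injective_iff.mp hf
  exact Matrix.det_zero_of_row_eq hne (funext fun j' => by simp [Matrix.submatrix_apply, hij])

lemma diag_minors {R : Type*} [CommRing R] {m n k : ℕ} (hk : k ≤ m) (hmn : m ≤ n)
    (d : Fin m → ℕ) (hdvd : ∀ c c' : Fin m, c ≤ c' → d c ∣ d c')
    (D : Matrix (Fin m) (Fin n) R)
    (hD : ∀ c j, D c j = if (j : ℕ) = (c : ℕ) then ((d c : ℕ) : R) else 0) :
    minorsIdeal D k = Ideal.span {((∏ c : Fin k, d (Fin.castLE hk c) : ℕ) : R)} := by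
  classical
  apply le_antisymm
  · rw [minorsIdeal, Ideal.span_le]
    rintro x ⟨f, g, rfl⟩
    rw [SetLike.mem_coe, Ideal.mem_span_singleton]
    by_cases hf : Function.Injective f
    · rw [Matrix.det_apply']
      apply Finset.dvd_sum
      intro σ _
      apply Dvd.dvd.mul_left
      by_cases hz : ∀ i : Fin k, ((g i : ℕ) = (f (σ i) : ℕ))
      · have h4 : ∏ i, (D.submatrix f g) (σ i) i = ((∏ i, d (f (σ i)) : ℕ) : R) := by
          push_cast
          exact Finset.prod_congr rfl fun i _ => by
            rw [Matrix.submatrix_apply, hD, if_pos (hz i)]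
        rw [h4]
        exact Nat.cast_dvd_cast (prod_sorted_dvd hk d hdvd (f ∘ σ) (hf.comp σ.injective))
      · push_neg at hz
        obtain ⟨i, hi⟩ := hz
        have h4 : ∏ i', (D.submatrix f g) (σ i') i' = 0 :=
          Finset.prod_eq_zero (Finset.mem_univ i)
            (by rw [Matrix.submatrix_apply, hD, if_neg hi])
        rw [h4]
        exact dvd_zero _
    · obtain ⟨i, j, hij, hne⟩ := Function.not_injective_iff.mp hf
      have h4 : (D.submatrix f g).det = 0 :=
        Matrix.det_zero_of_row_eq hne (funext fun j' => by simp [Matrix.submatrix_apply, hij])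
      rw [h4]
      exact dvd_zero _
  · rw [Ideal.span_le, Set.singleton_subset_iff]
    have hsub : D.submatrix (Fin.castLE hk) (Fin.castLE (hk.trans hmn))
        = Matrix.diagonal (fun c : Fin k => ((d (Fin.castLE hk c) : ℕ) : R)) := by
      ext i j
      rw [Matrix.submatrix_apply, hD, Matrix.diagonal_apply]
      simp only [Fin.coe_castLE]
      by_cases hij : i = j
      · subst hij; simp
      · rw [if_neg (by simpa [Fin.ext_iff, eq_comm] using hij), if_neg hij]
    have h5 : ((∏ c : Fin k, d (Fin.castLE hk c) : ℕ) : R)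
        = (D.submatrix (Fin.castLE hk) (Fin.castLE (hk.trans hmn))).det := by
      rw [hsub, Matrix.det_diagonal, Nat.cast_prod]
    rw [SetLike.mem_coe, h5]
    exact Ideal.subset_span ⟨_, _, rfl⟩

lemma ann_iff {R : Type*} [CommRing R] [Finite R] (a : R) :
    (∀ x : R, (∀ y ∈ Ideal.span {a}, x * y = 0) → x = 0) ↔ IsUnit a := by
  constructor
  · intro hreg
    have hinj : Function.Injective (fun x : R => x * a) := by
      intro x y hxy
      simp only at hxy
      have h1 : (x - y) * a = 0 := by rw [sub_mul, hxy, sub_self]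
      have h2 : x - y = 0 := by
        apply hreg
        intro z hz
        obtain ⟨c, rfl⟩ := Ideal.mem_span_singleton.mp hz
        rw [mul_comm a c, ← mul_assoc, mul_comm (x-y) c, mul_assoc, h1, mul_zero]
      linear_combination h2
    obtain ⟨x, hx⟩ := Finite.injective_iff_surjective.mp hinj 1
    exact IsUnit.of_mul_eq_one (a := a) x (by rw [mul_comm]; exact hx)
  · intro ha x hx
    have h1 := hx a (Ideal.subset_span rfl)
    obtain ⟨u, rfl⟩ := ha
    calc x = x * ↑u * ↑u⁻¹ := by rw [mul_assoc, u.mul_inv, mul_one]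
    _ = 0 := by rw [h1, zero_mul]


theorem stmt_0 (t : ℕ) (ht : 1 ≤ t) (p s : Fin t → ℕ)
    (hp : ∀ i, (p i).Prime) (hs : ∀ i, 1 ≤ s i) (hpinj : Function.Injective p)
    (h : ℕ) (hh : h = ∏ i, p i ^ s i)
    (m n : ℕ) (hmn : m ≤ n)
    (α : Fin t → Fin m → ℕ)
    (hmono : ∀ i, Monotone (α i))
    (hle : ∀ i c, α i c ≤ s i)
    (S : Matrix (Fin m) (Fin m) (ZMod h)) (hS : IsUnit S)
    (T : Matrix (Fin n) (Fin n) (ZMod h)) (hT : IsUnit T)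
    (D : Matrix (Fin m) (Fin n) (ZMod h))
    (hD : ∀ (c : Fin m) (j : Fin n),
      D c j = if (j : ℕ) = (c : ℕ) then ((∏ i, p i ^ α i c : ℕ) : ZMod h) else 0)
    (A : Matrix (Fin m) (Fin n) (ZMod h)) (hA : A = S * D * T) :
    mccoyRank A = sSup {c | c ≤ m ∧ ∀ j : Fin m, (j : ℕ) < c → ∀ i, α i j = 0} := by
  classical
  have hhpos : 0 < h := by
    rw [hh]; exact Finset.prod_pos fun i _ => pow_pos (hp i).pos _
  have hh1 : 1 < h := by
    have i0 : Fin t := ⟨0, ht⟩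
    have hple : p i0 ^ s i0 ∣ h := hh ▸ Finset.dvd_prod_of_mem _ (Finset.mem_univ i0)
    have h1 : 1 < p i0 ^ s i0 :=
      Nat.one_lt_pow (Nat.one_le_iff_ne_zero.mp (hs i0)) (hp i0).one_lt
    exact h1.trans_le (Nat.le_of_dvd hhpos hple)
  haveI : Fact (1 < h) := ⟨hh1⟩
  haveI : NeZero h := ⟨hhpos.ne'⟩
  -- the diagonal entries
  have hdvd : ∀ c c' : Fin m, c ≤ c' →
      (∏ i, p i ^ α i c) ∣ (∏ i, p i ^ α i c') := fun c c' hcc =>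
    Finset.prod_dvd_prod_of_dvd _ _ fun i _ => pow_dvd_pow _ (hmono i hcc)
  -- invariance of minors ideals
  obtain ⟨u, hu⟩ := hS
  obtain ⟨v, hv⟩ := hT
  set U : Matrix (Fin m) (Fin m) (ZMod h) := ↑u⁻¹ with hU
  set V : Matrix (Fin n) (Fin n) (ZMod h) := ↑v⁻¹ with hV
  have hD' : D = U * A * V := by
    rw [hA, ← hu, ← hv, hU, hV]
    simp only [← Matrix.mul_assoc]
    rw [Units.inv_mul, Matrix.one_mul, Matrix.mul_assoc, Units.mul_inv, Matrix.mul_one]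
  have hIA : ∀ k, minorsIdeal A k = minorsIdeal D k := by
    intro k
    apply le_antisymm
    · rw [hA]
      exact (minorsIdeal_mul_le_left (S * D) T).trans (minorsIdeal_mul_le_right S D)
    · rw [hD']
      exact (minorsIdeal_mul_le_left (U * A) V).trans (minorsIdeal_mul_le_right U A)
  have hset : {k | ∀ x : ZMod h, (∀ y ∈ minorsIdeal A k, x * y = 0) → x = 0}
      = {c | c ≤ m ∧ ∀ j : Fin m, (j : ℕ) < c → ∀ i, α i j = 0} := by
    ext k
    simp only [Set.mem_setOf_eq]
    by_cases hk : k ≤ m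
    · have e1 : minorsIdeal A k
          = Ideal.span {((∏ c : Fin k, ∏ i, p i ^ α i (Fin.castLE hk c) : ℕ) : ZMod h)} :=
        (hIA k).trans (diag_minors hk hmn _ hdvd D hD)
      rw [e1, ann_iff, ZMod.isUnit_iff_coprime]
      constructor
      · intro hcop
        refine ⟨hk, fun j hj i => ?_⟩
        by_contra hne
        have hjeq : Fin.castLE hk (⟨(j : ℕ), hj⟩ : Fin k) = j := by
          ext; rfl
        have h1 : p i ∣ ∏ c : Fin k, ∏ i, p i ^ α i (Fin.castLE hk c) := by
          refine dvd_trans (dvd_trans (dvd_pow_self _ hne) ?_)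
            (Finset.dvd_prod_of_mem _ (Finset.mem_univ (⟨(j : ℕ), hj⟩ : Fin k)))
          rw [hjeq]
          exact Finset.dvd_prod_of_mem _ (Finset.mem_univ i)
        have h2 : p i ∣ h := by
          rw [hh]
          exact dvd_trans (dvd_pow_self _ (Nat.one_le_iff_ne_zero.mp (hs i)))
            (Finset.dvd_prod_of_mem _ (Finset.mem_univ i))
        rw [Nat.coprime_iff_gcd_eq_one] at hcop
        have h3 : p i ∣ 1 := hcop ▸ Nat.dvd_gcd h1 h2
        exact (hp i).one_lt.ne' (Nat.dvd_one.mp h3)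
      · rintro ⟨-, hall⟩
        have h1 : ∏ c : Fin k, ∏ i, p i ^ α i (Fin.castLE hk c) = 1 :=
          Finset.prod_eq_one fun c _ => Finset.prod_eq_one fun i _ => by
            rw [hall (Fin.castLE hk c) (by simpa using c.isLt) i, pow_zero]
        rw [h1]
        exact Nat.coprime_one_left _
    · push_neg at hk
      constructor
      · intro hreg
        exfalso
        have hz : minorsIdeal A k = ⊥ := (hIA k).trans (minors_eq_bot hk D)
        have h1 : (1 : ZMod h) = 0 := hreg 1 fun y hy => by
          rw [hz, Ideal.mem_bot] at hy
          rw [hy, mul_zero]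
        exact one_ne_zero h1
      · rintro ⟨hkm, -⟩
        omega
  rw [mccoyRank, hset]


end Paper
end

section
/- Let m ≤ n and X ∈ Z_h^{m×n}. Then X has a right inverse (there exists Y ∈ Z_h^{n×m} with X·Y = I_m) if and only if the McCoy rank of X equals m. -/
open scoped Matrix BigOperators

namespace Paper

/-- Generalized Cauchy–Binet-ish expansion of `det (A * B)` in terms of row-minors of `B`. -/
lemma det_mul_expand {R : Type*} [CommRing R] {m n : ℕ}
    (A : Matrix (Fin m) (Fin n) R) (B : Matrix (Fin n) (Fin m) R) :
    (A * B).det = ∑ r : Fin m → Fin n, (∏ i, A i (r i)) * (B.submatrix r id).det := by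
  have h1 : A * B = Matrix.of (fun i => ∑ k, A i k • B k) := by
    ext i j
    simp [Matrix.mul_apply, Finset.sum_apply]
  rw [h1]
  have h2 := (Matrix.detRowAlternating (R := R) (n := Fin m)).toMultilinearMap.map_sum
    (fun i (k : Fin n) => A i k • B k)
  have h3 : (Matrix.of fun i => ∑ k, A i k • B k).det
      = ∑ r : Fin m → Fin n, Matrix.detRowAlternating (fun i => A i (r i) • B (r i)) := h2
  rw [h3]
  refine Finset.sum_congr rfl fun r _ => ?_
  have h4 := (Matrix.detRowAlternating (R := R) (n := Fin m)).toMultilinearMap.map_smul_univ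
    (fun i => A i (r i)) (fun i => B (r i))
  exact h4.trans (by rw [smul_eq_mul]; rfl)


lemma one_mem_minors {R : Type*} [CommRing R] {m n : ℕ} (X : Matrix (Fin m) (Fin n) R)
    (hX : HasRightInv X) : (1 : R) ∈ minorsIdeal X m := by
  obtain ⟨Y, hY⟩ := hX
  have h1 : (1 : R) = ((X * Y)ᵀ).det := by rw [hY]; simp
  have h2 : (X * Y)ᵀ = Yᵀ * Xᵀ := by rw [Matrix.transpose_mul]
  rw [h2, det_mul_expand] at h1
  rw [h1]
  refine Ideal.sum_mem _ fun r _ => Ideal.mul_mem_left _ _ ?_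
  have h3 : (Xᵀ.submatrix r id).det = ((X.submatrix id r)).det := by
    rw [← Matrix.transpose_submatrix, Matrix.det_transpose]
  rw [h3]
  exact Ideal.subset_span ⟨id, r, rfl⟩

lemma hasRightInv_of_minors_top {R : Type*} [CommRing R] {m n : ℕ}
    (X : Matrix (Fin m) (Fin n) R) (hX : minorsIdeal X m = ⊤) : HasRightInv X := by
  classical
  let J : Ideal R :=
    { carrier := {d | ∃ Y : Matrix (Fin n) (Fin m) R, X * Y = d • (1 : Matrix (Fin m) (Fin m) R)}
      zero_mem' := ⟨0, by simp⟩
      add_mem' := by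
        rintro a b ⟨Y, hY⟩ ⟨Z, hZ⟩
        exact ⟨Y + Z, by rw [Matrix.mul_add, hY, hZ, add_smul]⟩
      smul_mem' := by
        rintro c d ⟨Y, hY⟩
        refine ⟨c • Y, ?_⟩
        rw [Matrix.mul_smul, hY, smul_smul, smul_eq_mul] }
  have hsub : minorsIdeal X m ≤ J := by
    rw [minorsIdeal]
    refine Ideal.span_le.2 ?_
    rintro d ⟨f, g, rfl⟩
    by_cases hf : Function.Injective f
    · have hbij : Function.Bijective f := (Finite.injective_iff_bijective).1 hf
      let e : Fin m ≃ Fin m := Equiv.ofBijective f hbij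
      set M : Matrix (Fin m) (Fin m) R := X.submatrix f g with hM
      let C : Matrix (Fin n) (Fin m) R :=
        Matrix.of fun k j => if k = g j then (1 : R) else 0
      let Q : Matrix (Fin m) (Fin m) R := (1 : Matrix (Fin m) (Fin m) R).submatrix id ⇑e.symm
      refine ⟨C * (M.adjugate * Q), ?_⟩
      have hC : X * C = M.submatrix (⇑e.symm) id := by
        ext i j
        have hfe : f (e.symm i) = i := e.apply_symm_apply i
        simp only [Matrix.mul_apply, Matrix.of_apply, Matrix.submatrix_apply, id_eq,
          C, mul_ite, mul_one, mul_zero, Finset.sum_ite_eq', Finset.mem_univ, if_true, hM,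
          hfe]
      have hassoc : X * (C * (M.adjugate * Q)) = (X * C) * M.adjugate * Q := by
        rw [← Matrix.mul_assoc, ← Matrix.mul_assoc]
      rw [hassoc, hC]
      have hs : M.submatrix (⇑e.symm) id * M.adjugate
          = (M * M.adjugate).submatrix (⇑e.symm) id := by
        ext i j
        simp [Matrix.mul_apply]
      rw [hs, Matrix.mul_adjugate]
      have hsm : ((M.det • (1 : Matrix (Fin m) (Fin m) R)).submatrix (⇑e.symm) id)
          = M.det • ((1 : Matrix (Fin m) (Fin m) R).submatrix (⇑e.symm) id) := by
        ext i j; rfl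
      rw [hsm, Matrix.smul_mul]
      have hQ : (1 : Matrix (Fin m) (Fin m) R).submatrix (⇑e.symm) id * Q = 1 := by
        ext i j
        simp only [Matrix.mul_apply, Matrix.submatrix_apply, id_eq, Matrix.one_apply,
          mul_ite, mul_one, mul_zero, Q]
        rw [Finset.sum_ite_eq' Finset.univ (e.symm j)]
        simp [e.symm.injective.eq_iff]
      rw [hQ]
    · obtain ⟨i, j, hij, hne⟩ : ∃ i j, f i = f j ∧ i ≠ j := by
        simp only [Function.Injective] at hf
        push_neg at hf
        exact hf
      have hd : (X.submatrix f g).det = 0 := by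
        refine Matrix.det_zero_of_row_eq hne ?_
        funext k
        simp [Matrix.submatrix_apply, hij]
      exact ⟨0, by simp [hd]⟩
  have h1 : (1 : R) ∈ J := hsub (hX ▸ Submodule.mem_top)
  obtain ⟨Y, hY⟩ := h1
  exact ⟨Y, by rw [hY, one_smul]⟩


lemma ann_iff_top (h : ℕ) [NeZero h] (I : Ideal (ZMod h)) :
    (∀ x : ZMod h, (∀ y ∈ I, x * y = 0) → x = 0) ↔ I = ⊤ := by
  constructor
  · intro hann
    haveI : IsPrincipalIdealRing (ZMod h) :=
      IsPrincipalIdealRing.of_surjective (Int.castRingHom (ZMod h)) ZMod.intCast_surjective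
    obtain ⟨d, rfl⟩ := (IsPrincipalIdealRing.principal I).principal
    have hinj : Function.Injective (fun x : ZMod h => x * d) := by
      intro a b hab
      have hab' : (a - b) * d = 0 := by
        simp only at hab
        rw [sub_mul, hab, sub_self]
      have : a - b = 0 := by
        refine hann (a - b) fun y hy => ?_
        obtain ⟨c, rfl⟩ := Ideal.mem_span_singleton'.1 hy
        calc (a - b) * (c * d) = c * ((a - b) * d) := by ring
        _ = 0 := by rw [hab', mul_zero]
      linear_combination this
    have hsurj := Finite.injective_iff_surjective.1 hinj
    obtain ⟨a, ha⟩ := hsurj 1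
    exact Ideal.eq_top_iff_one _ |>.2 (Ideal.mem_span_singleton'.2 ⟨a, ha⟩)
  · rintro rfl x hx
    simpa using hx 1 Submodule.mem_top

theorem stmt_2 (t : ℕ) (ht : 1 ≤ t) (p s : Fin t → ℕ)
    (hp : ∀ i, (p i).Prime) (hs : ∀ i, 1 ≤ s i) (hpinj : Function.Injective p)
    (h : ℕ) (hh : h = ∏ i, p i ^ s i)
    (m n : ℕ) (hmn : m ≤ n)
    (X : Matrix (Fin m) (Fin n) (ZMod h)) :
    HasRightInv X ↔ mccoyRank X = m := by
  classical
  have hh2 : 2 ≤ h := by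
    have i0 : Fin t := ⟨0, ht⟩
    have h1 : p i0 ^ s i0 ≤ ∏ i, p i ^ s i :=
      Finset.single_le_prod' (fun i _ => Nat.one_le_iff_ne_zero.2 (pow_ne_zero _ (hp i).pos.ne'))
        (Finset.mem_univ i0)
    have h2 : 2 ≤ p i0 ^ s i0 :=
      le_trans (hp i0).two_le (Nat.le_self_pow (Nat.one_le_iff_ne_zero.1 (hs i0)) _)
    omega
  haveI : NeZero h := ⟨by omega⟩
  haveI : Fact (1 < h) := ⟨by omega⟩
  set S := {k | ∀ x : ZMod h, (∀ y ∈ minorsIdeal X k, x * y = 0) → x = 0} with hS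
  have h0 : (0 : ℕ) ∈ S := by
    intro x hx
    have h1 : (1 : ZMod h) ∈ minorsIdeal X 0 :=
      Ideal.subset_span ⟨Fin.elim0, Fin.elim0, (Matrix.det_fin_zero).symm⟩
    simpa using hx 1 h1
  have hbdd : ∀ k ∈ S, k ≤ m := by
    intro k hk
    by_contra hlt
    push_neg at hlt
    have hzero : ∀ y ∈ minorsIdeal X k, (1 : ZMod h) * y = 0 := by
      intro y hy
      rw [one_mul]
      have hle : minorsIdeal X k ≤ ⊥ := by
        rw [minorsIdeal]
        refine Ideal.span_le.2 ?_
        rintro d ⟨f, g, rfl⟩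
        have hf : ¬ Function.Injective f := by
          intro hinj
          have := Fintype.card_le_of_injective f hinj
          simp only [Fintype.card_fin] at this
          omega
        obtain ⟨i, j, hij, hne⟩ : ∃ i j, f i = f j ∧ i ≠ j := by
          simp only [Function.Injective] at hf
          push_neg at hf
          exact hf
        have hdz : (X.submatrix f g).det = 0 :=
          Matrix.det_zero_of_row_eq hne (funext fun l => by simp [Matrix.submatrix_apply, hij])
        simp [hdz]
      simpa using hle hy
    exact one_ne_zero (hk 1 hzero)
  have hne : S.Nonempty := ⟨0, h0⟩
  have hbd : BddAbove S := ⟨m, fun k hk => hbdd k hk⟩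
  have hrank : mccoyRank X = sSup S := rfl
  constructor
  · intro hX
    have htop : minorsIdeal X m = ⊤ := Ideal.eq_top_iff_one _ |>.2 (one_mem_minors X hX)
    have hm : m ∈ S := (ann_iff_top h _).2 htop
    rw [hrank]
    exact le_antisymm (csSup_le hne fun k hk => hbdd k hk) (le_csSup hbd hm)
  · intro hr
    have hmem : sSup S ∈ S := Nat.sSup_mem hne hbd
    rw [← hrank, hr] at hmem
    exact hasRightInv_of_minors_top X ((ann_iff_top h _).1 hmem)

end Paper
end

section
/- Let m ≤ n and suppose α_1, α_2, …, α_m ∈ Z_h^n are linearly independent over Z_h. Then α_1,…,α_m can be extended to a basis of Z_h^n: there exist α_{m+1},…,α_n ∈ Z_h^n such that the family (α_1,…,α_n) is a basis of the free Z_h-module Z_h^n. -/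
open scoped Matrix BigOperators

namespace Paper

section AuxExtend
open Matrix

open Matrix
section Helpers

variable {N : ℕ} [NeZero N]

instance : IsPrincipalIdealRing (ZMod N) :=
  IsPrincipalIdealRing.of_surjective (Int.castRingHom (ZMod N)) ZMod.intCast_surjective

lemma isUnit_of_regular (d : ZMod N) (hd : ∀ x : ZMod N, x * d = 0 → x = 0) : IsUnit d := by
  have hinj : Function.Injective (fun x : ZMod N => x * d) := by
    intro x y hxy
    have := hd (x - y) (by rw [sub_mul, sub_eq_zero]; exact hxy)
    rwa [sub_eq_zero] at this
  obtain ⟨e, he⟩ := Finite.injective_iff_surjective.mp hinj 1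
  exact IsUnit.of_mul_eq_one (a := d) e (by rw [mul_comm]; exact he)

lemma exists_combination_eq_one {q : ℕ} (v : Fin q → ZMod N)
    (hv : ∀ x : ZMod N, (∀ j, x * v j = 0) → x = 0) :
    ∃ c : Fin q → ZMod N, ∑ j, v j * c j = 1 := by
  obtain ⟨d, hd⟩ := Submodule.IsPrincipal.principal (Ideal.span (Set.range v))
  have hdmem : d ∈ Ideal.span (Set.range v) := hd ▸ Ideal.mem_span_singleton_self d
  rw [Ideal.span, Submodule.mem_span_range_iff_exists_fun] at hdmem
  obtain ⟨c, hc⟩ := hdmem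
  have hvj : ∀ j, ∃ w, w * d = v j := by
    intro j
    rw [← Ideal.mem_span_singleton']
    show v j ∈ Submodule.span (ZMod N) {d}
    rw [← hd]
    exact Ideal.subset_span ⟨j, rfl⟩
  choose w hw using hvj
  have hdu : IsUnit d := by
    refine isUnit_of_regular d fun x hx => hv x fun j => ?_
    rw [← hw j, ← mul_assoc, mul_comm x (w j), mul_assoc, hx, mul_zero]
  obtain ⟨e, he⟩ := hdu.exists_right_inv
  refine ⟨fun j => c j * e, ?_⟩
  have : ∑ j, v j * (c j * e) = (∑ j, c j • v j) * e := by
    rw [Finset.sum_mul]; exact Finset.sum_congr rfl fun j _ => by simp [smul_eq_mul]; ring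
  rw [this, hc, he]

end Helpers

open Matrix

/-- extend a k×k matrix to (k+1)×(k+1) by adding an identity row/column at index 0 -/
def tl {k : ℕ} (W : Matrix (Fin k) (Fin k) ℤ) : Matrix (Fin (k+1)) (Fin (k+1)) ℤ :=
  Matrix.of (Fin.cons (Pi.single 0 1) (fun i => Fin.cons 0 (W i)))

lemma tl_apply_succ_succ {k : ℕ} (W : Matrix (Fin k) (Fin k) ℤ) (i j : Fin k) :
    tl W i.succ j.succ = W i j := by simp [tl]

lemma det_tl {k : ℕ} (W : Matrix (Fin k) (Fin k) ℤ) : (tl W).det = W.det := by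
  rw [Matrix.det_succ_row_zero]
  rw [Finset.sum_eq_single 0]
  · have h0 : (tl W) 0 0 = 1 := by simp [tl]
    have hsub : (tl W).submatrix Fin.succ (Fin.succAbove 0) = W := by
      ext i j
      simp [Matrix.submatrix_apply, Fin.succAbove_zero, tl_apply_succ_succ]
    rw [hsub, h0]
    simp
  · intro b _ hb
    have : (tl W) 0 b = 0 := by
      simp [tl, Pi.single_eq_of_ne hb]
    rw [this]; ring
  · intro h; exact absurd (Finset.mem_univ _) h

lemma vecMul_tl {k : ℕ} (v : Fin (k+1) → ℤ) (W : Matrix (Fin k) (Fin k) ℤ) :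
    v ᵥ* tl W = Fin.cons (v 0) ((fun i => v i.succ) ᵥ* W) := by
  funext j
  have hvm : ∀ (u : Fin (k+1) → ℤ) (M : Matrix (Fin (k+1)) (Fin (k+1)) ℤ) (x : Fin (k+1)),
      (u ᵥ* M) x = ∑ i, u i * M i x := by
    intro u M x; rfl
  induction j using Fin.cases with
  | zero =>
      rw [hvm, Fin.sum_univ_succ]
      have h0 : tl W 0 0 = 1 := by simp [tl]
      have hs : ∀ x : Fin k, tl W x.succ 0 = 0 := by intro x; simp [tl]
      rw [h0, mul_one]
      rw [Finset.sum_congr rfl fun x _ => by rw [hs x, mul_zero]]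
      simp
  | succ j' =>
      rw [hvm, Fin.sum_univ_succ]
      have h0 : tl W 0 j'.succ = 0 := by
        simp [tl, Pi.single_eq_of_ne (Fin.succ_ne_zero j')]
      rw [h0, mul_zero, zero_add, Fin.cons_succ]
      rw [Finset.sum_congr rfl fun x _ => by rw [tl_apply_succ_succ]]
      rfl

/-- a 2×2 matrix embedded in the identity at rows/cols 0,1 -/
def pl {k : ℕ} (x00 x01 x10 x11 : ℤ) : Matrix (Fin (k+2)) (Fin (k+2)) ℤ :=
  Matrix.of fun i j =>
    if i = 0 then (if j = 0 then x00 else if j = 1 then x01 else 0)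
    else if i = 1 then (if j = 0 then x10 else if j = 1 then x11 else 0)
    else if i = j then 1 else 0

lemma pl_apply_of_ne {k : ℕ} (x00 x01 x10 x11 : ℤ) {i : Fin (k+2)} (hi0 : i ≠ 0) (hi1 : i ≠ 1)
    (j : Fin (k+2)) : pl x00 x01 x10 x11 i j = if i = j then 1 else 0 := by
  simp [pl, hi0, hi1]

lemma pl_mul {k : ℕ} (a b c d a' b' c' d' : ℤ) :
    (pl (k := k) a b c d) * pl a' b' c' d' =
      pl (a*a'+b*c') (a*b'+b*d') (c*a'+d*c') (c*b'+d*d') := by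
  ext i j
  rw [Matrix.mul_apply, Fin.sum_univ_succ, Fin.sum_univ_succ]
  have h10 : (1 : Fin (k+2)) ≠ 0 := by simp [Fin.ext_iff]
  have hss0 : ∀ x : Fin k, x.succ.succ ≠ (0 : Fin (k+2)) := fun x => Fin.succ_ne_zero _
  have hss1 : ∀ x : Fin k, x.succ.succ ≠ (1 : Fin (k+2)) := by
    intro x; simp [Fin.ext_iff]
  have hsz : Fin.succ (0 : Fin (k+1)) = (1 : Fin (k+2)) := rfl
  by_cases hi0 : i = 0
  · subst hi0
    have hz : ∀ x : Fin k, pl (k := k) a b c d 0 x.succ.succ = 0 := by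
      intro x; simp [pl, hss0 x, hss1 x]
    rw [Finset.sum_congr rfl (fun x _ => by rw [hz x, zero_mul])]
    rw [hsz]
    simp only [pl, Matrix.of_apply, if_pos rfl, if_neg h10, add_zero]
    split_ifs <;> simp
  · by_cases hi1 : i = 1
    · subst hi1
      have hz : ∀ x : Fin k, pl (k := k) a b c d 1 x.succ.succ = 0 := by
        intro x; simp [pl, h10, hss0 x, hss1 x]
      rw [Finset.sum_congr rfl (fun x _ => by rw [hz x, zero_mul])]
      rw [hsz]
      simp only [pl, Matrix.of_apply, if_pos rfl, if_neg h10, add_zero]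
      split_ifs <;> simp
    · -- i ≥ 2
      obtain ⟨i'', rfl⟩ : ∃ i'' : Fin k, i = i''.succ.succ := by
        have h0 : (i : ℕ) ≠ 0 := fun h => hi0 (Fin.ext h)
        have h1 : (i : ℕ) ≠ 1 := fun h => hi1 (Fin.ext h)
        have hlt : (i : ℕ) - 2 < k + 2 - 2 := by omega
        exact ⟨⟨(i : ℕ) - 2, hlt⟩, Fin.ext (by simp [Fin.val_succ]; omega)⟩
      have key : ∀ x : Fin k,
          pl (k:=k) a b c d i''.succ.succ x.succ.succ * pl a' b' c' d' x.succ.succ j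
          = if i'' = x then pl a' b' c' d' x.succ.succ j else 0 := by
        intro x
        rw [pl_apply_of_ne _ _ _ _ (hss0 i'') (hss1 i'')]
        by_cases h : i'' = x
        · subst h; simp
        · have hne : i''.succ.succ ≠ x.succ.succ := by
            simpa [Fin.succ_inj] using h
          simp [hne, h]
      rw [Finset.sum_congr rfl (fun x _ => key x), Finset.sum_ite_eq]
      rw [hsz, pl_apply_of_ne _ _ _ _ (hss0 i'') (hss1 i''),
          pl_apply_of_ne _ _ _ _ (hss0 i'') (hss1 i'')]
      simp only [if_neg (hss0 i''), if_neg (hss1 i''), zero_mul, zero_add,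
        if_pos (Finset.mem_univ _)]
      rw [pl_apply_of_ne _ _ _ _ (hss0 i'') (hss1 i''),
          pl_apply_of_ne _ _ _ _ (hss0 i'') (hss1 i'')]

lemma pl_one {k : ℕ} : pl (k := k) 1 0 0 1 = 1 := by
  ext i j
  have h10 : (1 : Fin (k+2)) ≠ 0 := by simp [Fin.ext_iff]
  by_cases hi0 : i = 0
  · subst hi0
    rw [Matrix.one_apply]
    simp only [pl, Matrix.of_apply, if_pos rfl]
    split_ifs with h1 h2 <;> first | rfl | (exfalso; simp_all [eq_comm])
  · by_cases hi1 : i = 1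
    · subst hi1
      rw [Matrix.one_apply]
      simp only [pl, Matrix.of_apply, if_neg h10, if_pos rfl]
      split_ifs with h1 h2 <;> first | rfl | (exfalso; simp_all [eq_comm])
    · rw [pl_apply_of_ne _ _ _ _ hi0 hi1, Matrix.one_apply]

lemma vecMul_pl {k : ℕ} (v : Fin (k+2) → ℤ) (a b c d : ℤ) :
    v ᵥ* pl a b c d = fun j =>
      if j = 0 then v 0 * a + v 1 * c else if j = 1 then v 0 * b + v 1 * d else v j := by
  funext j
  have h10 : (1 : Fin (k+2)) ≠ 0 := by simp [Fin.ext_iff]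
  have hss0 : ∀ x : Fin k, x.succ.succ ≠ (0 : Fin (k+2)) := fun x => Fin.succ_ne_zero _
  have hss1 : ∀ x : Fin k, x.succ.succ ≠ (1 : Fin (k+2)) := by
    intro x; simp [Fin.ext_iff]
  have hsz : Fin.succ (0 : Fin (k+1)) = (1 : Fin (k+2)) := rfl
  show ∑ i, v i * pl a b c d i j = _
  rw [Fin.sum_univ_succ, Fin.sum_univ_succ, hsz]
  by_cases hj0 : j = 0
  · subst hj0
    have hz : ∀ x : Fin k, v x.succ.succ * pl (k := k) a b c d x.succ.succ 0 = 0 := by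
      intro x; rw [pl_apply_of_ne _ _ _ _ (hss0 x) (hss1 x), if_neg (hss0 x), mul_zero]
    rw [Finset.sum_congr rfl fun x _ => hz x]
    simp [pl, h10]
  · by_cases hj1 : j = 1
    · subst hj1
      have hz : ∀ x : Fin k, v x.succ.succ * pl (k := k) a b c d x.succ.succ 1 = 0 := by
        intro x; rw [pl_apply_of_ne _ _ _ _ (hss0 x) (hss1 x), if_neg (hss1 x), mul_zero]
      rw [Finset.sum_congr rfl fun x _ => hz x]
      simp [pl, h10]
    · obtain ⟨j'', rfl⟩ : ∃ j'' : Fin k, j = j''.succ.succ := by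
        have h0 : (j : ℕ) ≠ 0 := fun h => hj0 (Fin.ext h)
        have h1 : (j : ℕ) ≠ 1 := fun h => hj1 (Fin.ext h)
        have hlt : (j : ℕ) - 2 < k + 2 - 2 := by omega
        exact ⟨⟨(j : ℕ) - 2, hlt⟩, Fin.ext (by simp [Fin.val_succ]; omega)⟩
      have key : ∀ x : Fin k, v x.succ.succ * pl (k := k) a b c d x.succ.succ j''.succ.succ
          = if x = j'' then v x.succ.succ else 0 := by
        intro x
        rw [pl_apply_of_ne _ _ _ _ (hss0 x) (hss1 x)]
        by_cases h : x = j''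
        · subst h; simp
        · have hne : x.succ.succ ≠ j''.succ.succ := by simpa [Fin.succ_inj] using h
          simp [hne, h]
      rw [Finset.sum_congr rfl fun x _ => key x, Finset.sum_ite_eq']
      have e0 : pl (k := k) a b c d 0 j''.succ.succ = 0 := by
        simp [pl, hss0 j'', hss1 j'']
      have e1 : pl (k := k) a b c d 1 j''.succ.succ = 0 := by
        simp [pl, h10, hss0 j'', hss1 j'']
      rw [e0, e1]
      simp [hss0 j'', hss1 j'']

lemma int_row_reduce : ∀ (q : ℕ) (v : Fin (q+1) → ℤ),
    ∃ (W : Matrix (Fin (q+1)) (Fin (q+1)) ℤ) (g : ℤ),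
      IsUnit W.det ∧ v ᵥ* W = Pi.single 0 g := by
  intro q
  induction q with
  | zero =>
    intro v
    refine ⟨1, v 0, by simp, ?_⟩
    rw [Matrix.vecMul_one]
    funext j
    have : j = 0 := Fin.ext (by omega)
    subst this
    simp
  | succ q ih =>
    intro v
    obtain ⟨W', g', hW', hred⟩ := ih (fun i => v i.succ)
    have hT : v ᵥ* tl W' = Fin.cons (v 0) (Pi.single 0 g') := by rw [vecMul_tl, hred]
    set a := v 0 with ha_def
    by_cases hg0 : Int.gcd a g' = 0
    · have ha : a = 0 := (Int.gcd_eq_zero_iff.mp hg0).1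
      have hg' : g' = 0 := (Int.gcd_eq_zero_iff.mp hg0).2
      refine ⟨tl W', 0, by rw [det_tl]; exact hW', ?_⟩
      rw [hT, ha, hg']
      funext j
      induction j using Fin.cases with
      | zero => simp
      | succ j' => simp [Fin.cons_succ]
    · set g : ℤ := (Int.gcd a g' : ℤ) with hg_def
      have hgne : g ≠ 0 := Int.natCast_ne_zero.mpr hg0
      have hgdvd1 : g ∣ a := Int.gcd_dvd_left a g'
      have hgdvd2 : g ∣ g' := Int.gcd_dvd_right a g'
      set p := Int.gcdA a g' with hp_def
      set qq := Int.gcdB a g' with hqq_def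
      have hbez : g = a * p + g' * qq := Int.gcd_eq_gcd_ab a g'
      set a' := a / g with ha'_def
      set b' := g' / g with hb'_def
      have ha' : a = g * a' := (Int.mul_ediv_cancel' hgdvd1).symm
      have hb' : g' = g * b' := (Int.mul_ediv_cancel' hgdvd2).symm
      have hkey : p * a' + qq * b' = 1 := by
        have h2 : g * (p * a' + qq * b') = g * 1 := by
          calc g * (p * a' + qq * b') = (g * a') * p + (g * b') * qq := by ring
          _ = a * p + g' * qq := by rw [← ha', ← hb']
          _ = g * 1 := by rw [mul_one]; exact hbez.symm
        exact mul_left_cancel₀ hgne h2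
      refine ⟨tl W' * pl p (-b') qq a', g, ?_, ?_⟩
      · rw [Matrix.det_mul, det_tl]
        refine hW'.mul (Matrix.isUnit_det_of_right_inverse (B := pl a' b' (-qq) p) ?_)
        rw [pl_mul]
        have hpl : pl (k := q) (p * a' + -b' * -qq) (p * b' + -b' * p) (qq * a' + a' * -qq)
            (qq * b' + a' * p) = pl 1 0 0 1 := by
          have e1 : p * a' + -b' * -qq = 1 := by linear_combination hkey
          have e2 : p * b' + -b' * p = 0 := by ring
          have e3 : qq * a' + a' * -qq = 0 := by ring
          have e4 : qq * b' + a' * p = 1 := by linear_combination hkey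
          rw [e1, e2, e3, e4]
        rw [hpl, pl_one]
      · rw [← Matrix.vecMul_vecMul, hT, vecMul_pl]
        funext j
        have h1s : (1 : Fin (q+2)) = Fin.succ 0 := rfl
        by_cases hj0 : j = 0
        · subst hj0
          rw [if_pos rfl, Pi.single_eq_same, h1s, Fin.cons_zero, Fin.cons_succ,
            Pi.single_eq_same]
          linear_combination hbez.symm
        · by_cases hj1 : j = 1
          · subst hj1
            have h10 : (1 : Fin (q+2)) ≠ 0 := by simp [Fin.ext_iff]
            rw [if_neg h10, if_pos rfl, Pi.single_eq_of_ne h10, h1s, Fin.cons_zero,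
              Fin.cons_succ, Pi.single_eq_same]
            rw [ha', hb']
            ring
          · simp only [if_neg hj0, if_neg hj1]
            rw [Pi.single_eq_of_ne hj0]
            obtain ⟨j', rfl⟩ : ∃ j', j = Fin.succ j' := ⟨j.pred hj0, (Fin.succ_pred j hj0).symm⟩
            rw [Fin.cons_succ]
            have hj'0 : j' ≠ 0 := by
              rintro rfl; exact hj1 rfl
            rw [Pi.single_eq_of_ne hj'0]

section ZModPart

variable {N : ℕ} [NeZero N]

lemma row_reduce_zmod {q : ℕ} (w : Fin (q+1) → ZMod N)
    (hw : ∃ c : Fin (q+1) → ZMod N, ∑ j, w j * c j = 1) :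
    ∃ W : Matrix (Fin (q+1)) (Fin (q+1)) (ZMod N), IsUnit W.det ∧
      w ᵥ* W = (Pi.single 0 1 : Fin (q+1) → ZMod N) := by
  obtain ⟨Wz, g, hWz, hredz⟩ := int_row_reduce q (fun j => ((w j).val : ℤ))
  set f : ℤ →+* ZMod N := Int.castRingHom (ZMod N) with hf
  set W1 : Matrix (Fin (q+1)) (Fin (q+1)) (ZMod N) := Wz.map f with hW1def
  have hdet1 : IsUnit W1.det := by
    have h1 : f Wz.det = W1.det := by
      rw [RingHom.map_det]; rfl
    rw [← h1]
    exact hWz.map f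
  have hcastw : ∀ i, f (((w i).val : ℤ)) = w i := by
    intro i
    show (((w i).val : ℤ) : ZMod N) = w i
    push_cast
    exact ZMod.natCast_rightInverse (w i)
  have hred1 : w ᵥ* W1 = (fun j => if j = 0 then (g : ZMod N) else 0) := by
    funext j
    show ∑ i, w i * W1 i j = _
    have hterm : ∀ i, w i * W1 i j = f (((w i).val : ℤ) * Wz i j) := by
      intro i
      rw [_root_.map_mul, hcastw i]
      rfl
    rw [Finset.sum_congr rfl fun i _ => hterm i, ← map_sum]
    have hz' : ∑ i, ((w i).val : ℤ) * Wz i j = (Pi.single 0 g : Fin (q+1) → ℤ) j :=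
      congrFun hredz j
    rw [hz']
    by_cases hj : j = 0
    · subst hj; rw [Pi.single_eq_same, if_pos rfl]; rfl
    · rw [Pi.single_eq_of_ne hj, if_neg hj, map_zero]
  obtain ⟨c, hc⟩ := hw
  have hginv : IsUnit ((g : ZMod N)) := by
    set X := W1⁻¹ with hX
    have hW1X : W1 * X = 1 := Matrix.mul_nonsing_inv _ hdet1
    have hw_eq : w = (fun j => if j = 0 then (g : ZMod N) else 0) ᵥ* X := by
      rw [← hred1, Matrix.vecMul_vecMul, hW1X, Matrix.vecMul_one]
    have hwj : ∀ j, w j = (g : ZMod N) * X 0 j := by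
      intro j
      rw [hw_eq]
      show ∑ i, (if i = 0 then (g : ZMod N) else 0) * X i j = _
      rw [Finset.sum_eq_single 0]
      · rw [if_pos rfl]
      · intro b _ hb; rw [if_neg hb, zero_mul]
      · intro h; exact absurd (Finset.mem_univ _) h
    have hfinal : (g : ZMod N) * ∑ j, X 0 j * c j = 1 := by
      rw [← hc, Finset.mul_sum]
      exact Finset.sum_congr rfl fun j _ => by rw [hwj j]; ring
    exact IsUnit.of_mul_eq_one _ hfinal
  obtain ⟨u, hu⟩ := hginv
  refine ⟨W1 * Matrix.diagonal (fun j => if j = (0 : Fin (q+1)) then ((u⁻¹ : (ZMod N)ˣ) : ZMod N) else 1),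
    ?_, ?_⟩
  · rw [Matrix.det_mul, Matrix.det_diagonal]
    refine hdet1.mul ?_
    rw [Finset.prod_ite_eq' Finset.univ (0 : Fin (q+1)) (fun _ => ((u⁻¹ : (ZMod N)ˣ) : ZMod N))]
    rw [if_pos (Finset.mem_univ _)]
    exact (u⁻¹).isUnit
  · rw [← Matrix.vecMul_vecMul, hred1]
    funext j
    rw [Matrix.vecMul_diagonal]
    by_cases hj : j = 0
    · subst hj
      rw [if_pos rfl, if_pos rfl, Pi.single_eq_same, ← hu, Units.mul_inv]
    · rw [if_neg hj, zero_mul, Pi.single_eq_of_ne hj]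

end ZModPart

section MainInduction

variable {N : ℕ} [NeZero N]

lemma main_extend :
    ∀ (m : ℕ) (n : ℕ) (hmn : m ≤ n) (A : Fin m → Fin n → ZMod N),
    (∀ x : Fin m → ZMod N, (∑ i, x i • A i) = 0 → ∀ i, x i = 0) →
    ∃ M : Matrix (Fin n) (Fin n) (ZMod N), IsUnit M.det ∧
      ∀ i : Fin m, M (Fin.castLE hmn i) = A i := by
  intro m
  induction m with
  | zero =>
      intro n hmn A hA
      exact ⟨1, by simp, fun i => i.elim0⟩
  | succ m ih =>
      intro n hmn A hA
      obtain ⟨k, rfl⟩ : ∃ k, n = m + (k + 1) := ⟨n - m - 1, by omega⟩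
      have hm : m ≤ m + (k+1) := by omega
      set A' : Fin m → Fin (m+(k+1)) → ZMod N := fun i => A i.castSucc with hA'
      have hA'ind : ∀ x : Fin m → ZMod N, (∑ i, x i • A' i) = 0 → ∀ i, x i = 0 := by
        intro x hx i
        have h2 := hA (Fin.snoc x 0) ?_ i.castSucc
        · rwa [Fin.snoc_castSucc] at h2
        · rw [Fin.sum_univ_castSucc]
          simp only [Fin.snoc_castSucc, Fin.snoc_last, zero_smul, add_zero]
          exact hx
      obtain ⟨M', hM'det, hM'rows⟩ := ih (m+(k+1)) hm A' hA'ind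
      set y : Fin (m+(k+1)) → ZMod N := A (Fin.last m) ᵥ* M'⁻¹ with hy
      have hyM' : y ᵥ* M' = A (Fin.last m) := by
        rw [hy, Matrix.vecMul_vecMul, Matrix.nonsing_inv_mul _ hM'det, Matrix.vecMul_one]
      set e : Fin m ⊕ Fin (k+1) ≃ Fin (m+(k+1)) := finSumFinEquiv with he
      have heinl : ∀ j₀ : Fin m, e (Sum.inl j₀) = Fin.castLE hm j₀ := by
        intro j₀
        rw [he, finSumFinEquiv_apply_left]
        exact Fin.ext rfl
      set wv : Fin (k+1) → ZMod N := fun j => y (e (Sum.inr j)) with hwv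
      -- the key pointwise identity : A (last) b as a sum over the two blocks
      have hAlast : ∀ b, A (Fin.last m) b
          = (∑ j₀ : Fin m, y (e (Sum.inl j₀)) * A j₀.castSucc b)
            + ∑ j' : Fin (k+1), wv j' * M' (e (Sum.inr j')) b := by
        intro b
        have h1 : A (Fin.last m) b = ∑ c, y c * M' c b := by
          rw [← hyM']; rfl
        rw [h1, ← Fintype.sum_equiv e (fun t => y (e t) * M' (e t) b)
          (fun c => y c * M' c b) (fun t => rfl), Fintype.sum_sum_type]
        congr 1
        refine Finset.sum_congr rfl fun j₀ _ => ?_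
        rw [heinl j₀, hM'rows j₀]
      have hwuni : ∃ c : Fin (k+1) → ZMod N, ∑ j, wv j * c j = 1 := by
        apply exists_combination_eq_one
        intro x hx
        have hxA : (∑ i, (Fin.snoc (fun j₀ : Fin m => x * y (e (Sum.inl j₀))) (-x)
            : Fin (m+1) → ZMod N) i • A i) = 0 := by
          funext b
          simp only [Finset.sum_apply, Pi.smul_apply, smul_eq_mul, Pi.zero_apply]
          rw [Fin.sum_univ_castSucc]
          simp only [Fin.snoc_castSucc, Fin.snoc_last]
          rw [hAlast b]
          have h2 : x * ((∑ j₀ : Fin m, y (e (Sum.inl j₀)) * A j₀.castSucc b)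
              + ∑ j' : Fin (k+1), wv j' * M' (e (Sum.inr j')) b)
              = ∑ j₀ : Fin m, x * y (e (Sum.inl j₀)) * A j₀.castSucc b := by
            rw [mul_add, Finset.mul_sum, Finset.mul_sum]
            have hz : ∀ j' : Fin (k+1), x * (wv j' * M' (e (Sum.inr j')) b) = 0 := by
              intro j'; rw [← mul_assoc, hx j', zero_mul]
            rw [Finset.sum_congr rfl fun j' _ => hz j', Finset.sum_const_zero, add_zero]
            exact Finset.sum_congr rfl fun j₀ _ => by ring
          rw [neg_mul, h2]
          exact add_neg_cancel _
        have h3 := hA _ hxA (Fin.last m)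
        simp only [Fin.snoc_last, neg_eq_zero] at h3
        exact h3
      obtain ⟨W, hWdet, hWred⟩ := row_reduce_zmod wv hwuni
      set Z : Matrix (Fin (k+1)) (Fin (k+1)) (ZMod N) := W⁻¹ with hZdef
      have hZdet : IsUnit Z.det := Matrix.isUnit_nonsing_inv_det W hWdet
      have hZ0 : ∀ j, wv j = Z 0 j := by
        have h1 : wv = (Pi.single 0 1 : Fin (k+1) → ZMod N) ᵥ* Z := by
          rw [← hWred, Matrix.vecMul_vecMul, Matrix.mul_nonsing_inv _ hWdet,
            Matrix.vecMul_one]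
        intro j
        rw [h1]
        show ∑ i, (Pi.single 0 1 : Fin (k+1) → ZMod N) i * Z i j = Z 0 j
        rw [Finset.sum_eq_single 0]
        · rw [Pi.single_eq_same, one_mul]
        · intro b _ hb; rw [Pi.single_eq_of_ne hb, zero_mul]
        · intro h; exact absurd (Finset.mem_univ _) h
      set C : Matrix (Fin (k+1)) (Fin m) (ZMod N) :=
        Matrix.of (fun i' j₀ => if i' = 0 then y (e (Sum.inl j₀)) else 0) with hC
      set Q : Matrix (Fin (m+(k+1))) (Fin (m+(k+1))) (ZMod N) :=
        Matrix.reindex e e (Matrix.fromBlocks 1 0 C Z) with hQ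
      have hQdet : IsUnit Q.det := by
        rw [hQ, Matrix.det_reindex_self, Matrix.det_fromBlocks_zero₁₂, Matrix.det_one,
          one_mul]
        exact hZdet
      have hQapp : ∀ (s t : Fin m ⊕ Fin (k+1)),
          Q (e s) (e t) = Matrix.fromBlocks 1 0 C Z s t := by
        intro s t
        rw [hQ, Matrix.reindex_apply, Matrix.submatrix_apply, Equiv.symm_apply_apply,
          Equiv.symm_apply_apply]
      have hrow : ∀ (s : Fin m ⊕ Fin (k+1)) (b : Fin (m+(k+1))),
          (Q * M') (e s) b
            = ∑ t : Fin m ⊕ Fin (k+1), Matrix.fromBlocks 1 0 C Z s t * M' (e t) b := by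
        intro s b
        rw [Matrix.mul_apply,
          ← Fintype.sum_equiv e (fun t => Q (e s) (e t) * M' (e t) b)
            (fun c => Q (e s) c * M' c b) (fun t => rfl)]
        exact Finset.sum_congr rfl fun t _ => by rw [hQapp]
      refine ⟨Q * M', by rw [Matrix.det_mul]; exact hQdet.mul hM'det, ?_⟩
      intro i
      induction i using Fin.lastCases with
      | last =>
          have hcast : Fin.castLE hmn (Fin.last m) = e (Sum.inr 0) := by
            rw [he, finSumFinEquiv_apply_right]
            exact Fin.ext (by simp)
          funext b
          rw [hcast, hrow (Sum.inr 0) b, Fintype.sum_sum_type]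
          simp only [Matrix.fromBlocks_apply₂₁, Matrix.fromBlocks_apply₂₂]
          rw [hAlast b]
          congr 1
          · refine Finset.sum_congr rfl fun j₀ _ => ?_
            rw [hC]
            simp only [Matrix.of_apply, if_pos rfl]
            rw [heinl j₀, hM'rows j₀]
            simp [hA']
          · refine Finset.sum_congr rfl fun j' _ => ?_
            rw [← hZ0 j']
      | cast i₀ =>
          have hcast : Fin.castLE hmn i₀.castSucc = e (Sum.inl i₀) := by
            rw [heinl i₀]
            exact Fin.ext rfl
          funext b
          rw [hcast, hrow (Sum.inl i₀) b, Fintype.sum_sum_type]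
          simp only [Matrix.fromBlocks_apply₁₁, Matrix.fromBlocks_apply₁₂, zero_mul,
            Matrix.zero_apply, Finset.sum_const_zero, add_zero]
          rw [Finset.sum_eq_single i₀]
          · rw [Matrix.one_apply_eq, one_mul, heinl i₀, hM'rows i₀]
          · intro b' _ hb'
            rw [Matrix.one_apply_ne (Ne.symm hb'), zero_mul]
          · intro h; exact absurd (Finset.mem_univ _) h

end MainInduction


end AuxExtend

theorem stmt_4 (t : ℕ) (ht : 1 ≤ t) (p s : Fin t → ℕ)
    (hp : ∀ i, (p i).Prime) (hs : ∀ i, 1 ≤ s i) (hpinj : Function.Injective p)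
    (h : ℕ) (hh : h = ∏ i, p i ^ s i)
    (m n : ℕ) (hmn : m ≤ n)
    (α : Fin m → Fin n → ZMod h)
    (hind : ∀ x : Fin m → ZMod h, (∑ i, x i • α i) = 0 → ∀ i, x i = 0) :
    ∃ b : Module.Basis (Fin n) (ZMod h) (Fin n → ZMod h),
      ∀ i : Fin m, b (Fin.castLE hmn i) = α i := by
  haveI hN : NeZero h := by
    constructor
    rw [hh]
    exact Finset.prod_ne_zero_iff.mpr fun i _ => pow_ne_zero _ (hp i).pos.ne'
  obtain ⟨M, hMdet, hMrows⟩ := main_extend m n hmn α hind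
  have hMT : Invertible M.transpose :=
    Matrix.invertibleOfIsUnitDet _ (by rw [Matrix.det_transpose]; exact hMdet)
  refine ⟨(Pi.basisFun (ZMod h) (Fin n)).map (Matrix.toLinearEquiv' M.transpose hMT), ?_⟩
  intro i
  rw [Module.Basis.map_apply, Pi.basisFun_apply]
  have happ : (Matrix.toLinearEquiv' M.transpose hMT) (Pi.single (Fin.castLE hmn i) 1)
      = Matrix.toLin' M.transpose (Pi.single (Fin.castLE hmn i) 1) := by
    rw [← Matrix.toLinearEquiv'_apply M.transpose hMT]; rfl
  rw [happ, Matrix.toLin'_apply, Matrix.mulVec_single]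
  funext j
  rw [Pi.smul_apply, op_smul_eq_mul, mul_one]
  show M (Fin.castLE hmn i) j = α i j
  rw [hMrows i]
end Paper
end

section
/- Let A be an a-subspace and B a b-subspace of Z_h^n, with matrix representations M_A ∈ Z_h^{a×n} and M_B ∈ Z_h^{b×n}, and let M ∈ Z_h^{(a+b)×n} be the matrix obtained by stacking M_A on top of M_B. Define dim(A∨B) as the minimum of dim(W) over all subspaces W of Z_h^n containing both A and B (this minimum exists since Z_h^n itself is an n-subspace). Then dim(A∨B) = a + b − dim(A∩B) = ρ(M), where A∩B is the intersection of the submodules A and B and ρ denotes the inner rank. -/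
open scoped Matrix BigOperators

namespace Paper

section Aux

open Matrix

variable {R : Type*} [CommRing R]

lemma vecMul_eq_sum_smul {m n : ℕ} (x : Fin m → R) (A : Matrix (Fin m) (Fin n) R) :
    x ᵥ* A = ∑ i, x i • A i := by
  funext j
  simp [Matrix.vecMul, dotProduct, Finset.sum_apply]

lemma mem_rowSpace_iff {m n : ℕ} {A : Matrix (Fin m) (Fin n) R} {v : Fin n → R} :
    v ∈ rowSpace A ↔ ∃ x : Fin m → R, v = x ᵥ* A := by
  rw [rowSpace, Submodule.mem_span_range_iff_exists_fun]
  constructor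
  · rintro ⟨c, hc⟩; exact ⟨c, by rw [vecMul_eq_sum_smul, hc]⟩
  · rintro ⟨x, rfl⟩; exact ⟨x, (vecMul_eq_sum_smul x A).symm⟩

lemma vecMul_mem_rowSpace {m n : ℕ} (A : Matrix (Fin m) (Fin n) R) (x : Fin m → R) :
    x ᵥ* A ∈ rowSpace A :=
  mem_rowSpace_iff.2 ⟨x, rfl⟩

lemma row_mem_rowSpace {m n : ℕ} (A : Matrix (Fin m) (Fin n) R) (i : Fin m) :
    A i ∈ rowSpace A :=
  Submodule.subset_span ⟨i, rfl⟩

lemma rowSpace_le_iff {m n : ℕ} {A : Matrix (Fin m) (Fin n) R}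
    {W : Submodule R (Fin n → R)} : rowSpace A ≤ W ↔ ∀ i, A i ∈ W := by
  rw [rowSpace, Submodule.span_le]
  constructor
  · intro hle i; exact hle ⟨i, rfl⟩
  · rintro hr _ ⟨i, rfl⟩; exact hr i

lemma vecMul_cancel_of_mem {m n : ℕ} {A : Matrix (Fin m) (Fin n) R}
    {A' : Matrix (Fin n) (Fin m) R} (hA : A * A' = 1) {v : Fin n → R}
    (hv : v ∈ rowSpace A) : (v ᵥ* A') ᵥ* A = v := by
  obtain ⟨x, rfl⟩ := mem_rowSpace_iff.1 hv
  rw [Matrix.vecMul_vecMul, Matrix.vecMul_vecMul, ← Matrix.mul_assoc, hA, Matrix.one_mul]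

lemma isSubspaceOfDim_top (n : ℕ) : IsSubspaceOfDim n n (⊤ : Submodule R (Fin n → R)) := by
  refine ⟨1, ⟨1, mul_one 1⟩, ?_⟩
  rw [eq_top_iff]
  intro x _
  exact mem_rowSpace_iff.2 ⟨x, (Matrix.vecMul_one x).symm⟩

lemma innerRank_le {m n r : ℕ} (M : Matrix (Fin m) (Fin n) R)
    (B : Matrix (Fin m) (Fin r) R) (C : Matrix (Fin r) (Fin n) R) (hBC : M = B * C) :
    innerRank M ≤ r :=
  Nat.sInf_le ⟨B, C, hBC⟩

lemma innerRank_spec {m n : ℕ} (M : Matrix (Fin m) (Fin n) R) :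
    ∃ (B : Matrix (Fin m) (Fin (innerRank M)) R) (C : Matrix (Fin (innerRank M)) (Fin n) R),
      M = B * C := by
  have hne : {r | ∃ (B : Matrix (Fin m) (Fin r) R) (C : Matrix (Fin r) (Fin n) R), M = B * C}.Nonempty :=
    ⟨n, M, 1, (Matrix.mul_one M).symm⟩
  exact Nat.sInf_mem hne

end Aux
section Core

open Matrix

lemma core_smith {m r : ℕ} (w : Fin r → (Fin m → ℤ)) :
    ∃ (k : ℕ), k ≤ r ∧ ∃ (T T' : Matrix (Fin m) (Fin m) ℤ) (f : Fin k → Fin m),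
      Function.Injective f ∧ T * T' = 1 ∧ T' * T = 1 ∧
      ∀ i, w i ∈ Submodule.span ℤ (Set.range fun j => T (f j)) := by
  classical
  set N : Submodule ℤ (Fin m → ℤ) := Submodule.span ℤ (Set.range w) with hN
  obtain ⟨k, snf⟩ := N.smithNormalForm (Pi.basisFun ℤ (Fin m))
  obtain ⟨bM, bN, f, av, hsnf⟩ := snf
  have hkr : k ≤ r := by
    have h1 : (k : Cardinal) = Module.rank ℤ N := by simpa using bN.mk_eq_rank''
    have h2 : Module.rank ℤ N ≤ (r : Cardinal) := by
      refine le_trans (rank_span_le (R := ℤ) (Set.range w)) ?_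
      refine le_trans Cardinal.mk_range_le ?_
      simp
    have := h1 ▸ h2
    exact_mod_cast this
  set T : Matrix (Fin m) (Fin m) ℤ := Matrix.of (fun i => (bM i : Fin m → ℤ)) with hT
  set X : Matrix (Fin m) (Fin m) ℤ := (Pi.basisFun ℤ (Fin m)).toMatrix bM with hX
  haveI : Invertible X := (Pi.basisFun ℤ (Fin m)).invertibleToMatrix bM
  have hXT : X = Tᵀ := by
    ext i j
    simp [hX, Module.Basis.toMatrix_apply, hT, Matrix.transpose_apply]
  refine ⟨k, hkr, T, (⅟X)ᵀ, f, f.injective, ?_, ?_, ?_⟩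
  · rw [← Matrix.transpose_transpose T, ← hXT, ← Matrix.transpose_mul, invOf_mul_self,
      Matrix.transpose_one]
  · rw [← Matrix.transpose_transpose T, ← hXT, ← Matrix.transpose_mul, mul_invOf_self,
      Matrix.transpose_one]
  · intro i
    have hwN : w i ∈ N := Submodule.subset_span (Set.mem_range_self i)
    have hsum := bN.sum_repr ⟨w i, hwN⟩
    rw [Submodule.mem_span_range_iff_exists_fun]
    refine ⟨fun j => bN.repr ⟨w i, hwN⟩ j * av j, ?_⟩
    have := congrArg (Submodule.subtype N) hsum
    simp only [map_sum, Submodule.subtype_apply, Submodule.coe_smul] at this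
    calc ∑ j, (bN.repr ⟨w i, hwN⟩ j * av j) • T (f j)
        = ∑ j, bN.repr ⟨w i, hwN⟩ j • (av j • bM (f j)) := by
          refine Finset.sum_congr rfl fun j _ => ?_
          rw [← smul_smul]
          rfl
      _ = ∑ j, bN.repr ⟨w i, hwN⟩ j • ((bN j : Fin m → ℤ)) := by
          refine Finset.sum_congr rfl fun j _ => by rw [hsnf j]
      _ = w i := this

end Core
section ZRed

open Matrix

variable {h : ℕ} [NeZero h]

/-- entrywise reduction -/
def redZ {n : ℕ} (v : Fin n → ℤ) : Fin n → ZMod h := fun j => ((v j : ℤ) : ZMod h)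

/-- entrywise lift -/
def liftZ {n : ℕ} (v : Fin n → ZMod h) : Fin n → ℤ := fun j => ((v j).val : ℤ)

lemma redZ_liftZ {n : ℕ} (v : Fin n → ZMod h) : redZ (liftZ v) = v := by
  funext j
  simp only [redZ, liftZ, Int.cast_natCast]
  exact ZMod.natCast_rightInverse (v j)

lemma cover_of_factor {r n : ℕ} (C : Matrix (Fin r) (Fin n) (ZMod h)) :
    ∃ (k : ℕ), k ≤ r ∧ ∃ G : Matrix (Fin k) (Fin n) (ZMod h),
      HasRightInv G ∧ rowSpace C ≤ rowSpace G := by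
  classical
  obtain ⟨k, hkr, T, T', f, hfinj, hTT', hT'T, hmem⟩ := core_smith (fun i => liftZ (C i))
  refine ⟨k, hkr, Matrix.of (fun j => redZ (T (f j))), ?_, ?_⟩
  · refine ⟨Matrix.of (fun (c : Fin n) (j : Fin k) => ((T' c (f j) : ℤ) : ZMod h)), ?_⟩
    ext j j'
    have : (T * T') (f j) (f j') = if f j = f j' then 1 else 0 := by
      rw [hTT', Matrix.one_apply]
    simp only [Matrix.mul_apply] at this ⊢
    have hcast : (∑ c, T (f j) c * T' c (f j') : ℤ) = if f j = f j' then 1 else 0 := this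
    calc (∑ c, (Matrix.of fun j => redZ (T (f j))) j c *
            (Matrix.of fun (c : Fin n) (j : Fin k) => ((T' c (f j) : ℤ) : ZMod h)) c j')
        = ((∑ c, T (f j) c * T' c (f j') : ℤ) : ZMod h) := by
          push_cast
          rfl
      _ = (1 : Matrix (Fin k) (Fin k) (ZMod h)) j j' := by
          rw [hcast]
          by_cases hjj : j = j'
          · simp [hjj, Matrix.one_apply]
          · have : f j ≠ f j' := fun hc => hjj (hfinj hc)
            simp [this, Matrix.one_apply, hjj]
  · rw [rowSpace_le_iff]
    intro i
    have hi := hmem i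
    rw [Submodule.mem_span_range_iff_exists_fun] at hi
    obtain ⟨c, hc⟩ := hi
    rw [mem_rowSpace_iff]
    refine ⟨fun j => ((c j : ℤ) : ZMod h), ?_⟩
    have : C i = redZ (liftZ (C i)) := (redZ_liftZ _).symm
    rw [this, ← hc]
    funext l
    simp only [vecMul_eq_sum_smul, Finset.sum_apply, Pi.smul_apply, smul_eq_mul, redZ]
    push_cast
    rfl

lemma leftker_unimodular {m r : ℕ} (Bm : Matrix (Fin m) (Fin r) (ZMod h)) :
    ∃ (k : ℕ), k ≤ r ∧ ∃ x : Fin (m - k) → Fin m → ZMod h,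
      Unimodular x ∧ ∀ j, x j ᵥ* Bm = 0 := by
  classical
  obtain ⟨k, hkr, T, T', f, hfinj, hTT', hT'T, hmem⟩ :=
    core_smith (fun (i : Fin r) => liftZ (fun l => Bm l i))
  -- k ≤ m as well, since f : Fin k → Fin m injective
  have hkm : k ≤ m := by
    have := Fintype.card_le_of_injective f hfinj
    simpa using this
  set Sc : Finset (Fin m) := (Finset.univ.image f)ᶜ with hSc
  have hcard : Sc.card = m - k := by
    rw [hSc, Finset.card_compl, Finset.card_image_of_injective _ hfinj]
    simp
  set g : Fin (m - k) → Fin m := fun j => (Sc.equivFin.symm (finCongr hcard.symm j) : Fin m)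
    with hg
  have hginj : Function.Injective g := by
    intro x y hxy
    have := Subtype.ext hxy
    have h2 := Sc.equivFin.symm.injective this
    exact finCongr hcard.symm |>.injective h2
  have hgmem : ∀ j, g j ∈ Sc := fun j => (Sc.equivFin.symm (finCongr hcard.symm j)).2
  have hgf : ∀ j c, f c ≠ g j := by
    intro j c hc
    have := hgmem j
    rw [hSc, Finset.mem_compl] at this
    exact this (hc ▸ Finset.mem_image_of_mem f (Finset.mem_univ c))
  refine ⟨k, hkr, fun j => redZ (fun l => T' l (g j)), ?_, ?_⟩
  · refine ⟨Matrix.of (fun (l : Fin m) (j : Fin (m - k)) => ((T (g j) l : ℤ) : ZMod h)), ?_⟩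
    ext j j'
    have : (T * T') (g j') (g j) = if g j' = g j then 1 else 0 := by
      rw [hTT', Matrix.one_apply]
    simp only [Matrix.mul_apply] at this
    calc (∑ l, (Matrix.of fun j => redZ (fun l => T' l (g j))) j l *
            (Matrix.of fun (l : Fin m) (j : Fin (m - k)) => ((T (g j) l : ℤ) : ZMod h)) l j')
        = ((∑ l, T (g j') l * T' l (g j) : ℤ) : ZMod h) := by
          push_cast
          simp only [Matrix.of_apply, redZ]
          rw [Finset.sum_congr rfl]
          intro l _
          push_cast
          ring
      _ = (1 : Matrix (Fin (m - k)) (Fin (m - k)) (ZMod h)) j j' := by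
          rw [this]
          by_cases hjj : j = j'
          · simp [hjj, Matrix.one_apply]
          · have : g j' ≠ g j := fun hc => hjj (hginj hc).symm
            simp [this, Matrix.one_apply, hjj]
  · intro j
    funext i
    have hi := hmem i
    rw [Submodule.mem_span_range_iff_exists_fun] at hi
    obtain ⟨c, hc⟩ := hi
    have hz : (∑ l, T' l (g j) * (liftZ (fun l' => Bm l' i)) l : ℤ) = 0 := by
      rw [← hc]
      simp only [Finset.sum_apply, Pi.smul_apply, smul_eq_mul, Finset.mul_sum]
      rw [Finset.sum_comm]
      refine Finset.sum_eq_zero fun cc _ => ?_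
      have h1 : ∑ l, T' l (g j) * (c cc * T (f cc) l) = c cc * (T * T') (f cc) (g j) := by
        rw [Matrix.mul_apply, Finset.mul_sum]
        exact Finset.sum_congr rfl fun l _ => by ring
      rw [h1, hTT', Matrix.one_apply, if_neg (hgf j cc), mul_zero]
    have hcalc : (redZ (fun l => T' l (g j)) ᵥ* Bm) i
        = ((∑ l, T' l (g j) * (liftZ (fun l' => Bm l' i)) l : ℤ) : ZMod h) := by
      simp only [Matrix.vecMul, dotProduct, redZ, liftZ]
      push_cast
      refine Finset.sum_congr rfl fun l _ => ?_
      rw [ZMod.natCast_val, ZMod.cast_id]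
    show (redZ (fun l => T' l (g j)) ᵥ* Bm) i = (0 : Fin r → ZMod h) i
    rw [hcalc, hz]
    simp

end ZRed
section SdimStep

open Matrix

variable {R : Type*} [CommRing R]

lemma unimodular_rows_li {m n : ℕ} {v : Fin m → Fin n → R} (hv : Unimodular v) :
    LinearIndependent R v := by
  obtain ⟨V', hV'⟩ := hv
  rw [Fintype.linearIndependent_iff]
  intro g hg
  have h1 : g ᵥ* (Matrix.of v) = 0 := by
    rw [vecMul_eq_sum_smul]
    exact hg
  have h2 : (g ᵥ* Matrix.of v) ᵥ* V' = g := by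
    rw [Matrix.vecMul_vecMul, hV', Matrix.vecMul_one]
  intro i
  rw [← h2, h1, Matrix.zero_vecMul]
  rfl

lemma unimodular_card_le [Nontrivial R] {m n : ℕ} {v : Fin m → Fin n → R}
    (hv : Unimodular v) : m ≤ n := by
  have := (unimodular_rows_li hv).fintype_card_le_finrank
  simpa [Module.finrank_fin_fun] using this

lemma unimodular_zero (n : ℕ) : Unimodular (fun (i : Fin 0) (_ : Fin n) => (0 : R)) := by
  refine ⟨0, ?_⟩
  ext i j
  exact i.elim0

lemma sdim_set_nonempty {n : ℕ} (V : Submodule R (Fin n → R)) :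
    {m | ∃ v : Fin m → Fin n → R, (∀ i, v i ∈ V) ∧ Unimodular v}.Nonempty :=
  ⟨0, fun (i : Fin 0) (_ : Fin n) => (0 : R), fun i => i.elim0, unimodular_zero n⟩

lemma sdim_set_bddAbove [Nontrivial R] {n : ℕ} (V : Submodule R (Fin n → R)) :
    BddAbove {m | ∃ v : Fin m → Fin n → R, (∀ i, v i ∈ V) ∧ Unimodular v} := by
  refine ⟨n, ?_⟩
  rintro m ⟨v, _, hv⟩
  exact unimodular_card_le hv

lemma sdim_spec [Nontrivial R] {n : ℕ} (V : Submodule R (Fin n → R)) :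
    ∃ v : Fin (sdim V) → Fin n → R, (∀ i, v i ∈ V) ∧ Unimodular v :=
  Nat.sSup_mem (sdim_set_nonempty V) (sdim_set_bddAbove V)

lemma le_sdim [Nontrivial R] {n m : ℕ} {V : Submodule R (Fin n → R)}
    (v : Fin m → Fin n → R) (hmem : ∀ i, v i ∈ V) (hv : Unimodular v) : m ≤ sdim V :=
  le_csSup (sdim_set_bddAbove V) ⟨v, hmem, hv⟩

lemma vecMul_append {a b n : ℕ} (x : Fin (a + b) → R) (MA : Matrix (Fin a) (Fin n) R)
    (MB : Matrix (Fin b) (Fin n) R) :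
    x ᵥ* (Matrix.of (Fin.append (fun i => MA i) (fun i => MB i)))
      = (fun i => x (Fin.castAdd b i)) ᵥ* MA + (fun i => x (Fin.natAdd a i)) ᵥ* MB := by
  funext j
  simp only [Matrix.vecMul, dotProduct, Pi.add_apply]
  rw [Fin.sum_univ_add]
  congr 1
  · exact Finset.sum_congr rfl fun i _ => by rw [Matrix.of_apply, Fin.append_left]
  · exact Finset.sum_congr rfl fun i _ => by rw [Matrix.of_apply, Fin.append_right]

lemma innerRank_le_of_ker_rows {m n : ℕ} (M : Matrix (Fin m) (Fin n) R)
    (T T' : Matrix (Fin m) (Fin m) R) (hTT' : T * T' = 1) (hT'T : T' * T = 1)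
    (S : Finset (Fin m)) (hker : ∀ i ∈ S, T i ᵥ* M = 0) :
    innerRank M ≤ m - S.card := by
  classical
  have hcard : (Sᶜ : Finset (Fin m)).card = m - S.card := by
    rw [Finset.card_compl, Fintype.card_fin]
  set e : ↥(Sᶜ : Finset (Fin m)) ≃ Fin (m - S.card) :=
    (Sᶜ : Finset (Fin m)).equivFin.trans (finCongr hcard) with he
  set B₁ : Matrix (Fin m) (Fin (m - S.card)) R :=
    Matrix.of (fun r j => T' r ((e.symm j : Fin m))) with hB₁
  set C₁ : Matrix (Fin (m - S.card)) (Fin n) R :=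
    Matrix.of (fun j col => (T * M) ((e.symm j : Fin m)) col) with hC₁
  refine innerRank_le M B₁ C₁ ?_
  have hTM0 : ∀ i ∈ S, ∀ l, (T * M) i l = 0 := by
    intro i hi l
    have := hker i hi
    have h2 : (T * M) i l = (T i ᵥ* M) l := by
      simp [Matrix.mul_apply, Matrix.vecMul, dotProduct]
    rw [h2, this]
    rfl
  have hM : M = T' * (T * M) := by
    rw [← Matrix.mul_assoc, hT'T, Matrix.one_mul]
  rw [hM]
  ext r l
  rw [Matrix.mul_apply]
  have h1 : ∑ j, T' r j * (T * M) j l = ∑ j ∈ (Sᶜ : Finset (Fin m)), T' r j * (T * M) j l := by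
    refine (Finset.sum_subset (Finset.subset_univ _) ?_).symm
    intro x _ hx
    rw [Finset.mem_compl, not_not] at hx
    rw [hTM0 x hx l, mul_zero]
  rw [h1, ← Finset.sum_coe_sort]
  rw [Matrix.mul_apply]
  refine Fintype.sum_equiv e _ _ ?_
  intro x
  simp [hB₁, hC₁]

end SdimStep
section FieldCompletion

open Matrix

variable {F : Type*} [Field F]

lemma rows_basis_isUnit_det {m : ℕ} (T : Matrix (Fin m) (Fin m) F)
    (hli : LinearIndependent F (fun i => T i)) : IsUnit T.det := by
  rcases Nat.eq_zero_or_pos m with hm | hm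
  · subst hm
    simp [Matrix.det_fin_zero]
  · haveI : Nonempty (Fin m) := ⟨⟨0, hm⟩⟩
    have hcard : Fintype.card (Fin m) = Module.finrank F (Fin m → F) := by
      simp [Module.finrank_fin_fun]
    let b := basisOfLinearIndependentOfCardEqFinrank hli hcard
    have hb : ∀ i, b i = T i := fun i => by
      simp [b, coe_basisOfLinearIndependentOfCardEqFinrank]
    haveI := (Pi.basisFun F (Fin m)).invertibleToMatrix b
    have hX : (Pi.basisFun F (Fin m)).toMatrix b = Tᵀ := by
      ext i j
      rw [Module.Basis.toMatrix_apply, Pi.basisFun_repr, hb, Matrix.transpose_apply]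
    have : IsUnit ((Pi.basisFun F (Fin m)).toMatrix b).det := Matrix.isUnit_det_of_invertible _
    rw [hX, Matrix.det_transpose] at this
    exact this

lemma field_completion_aux (m : ℕ) : ∀ (d k : ℕ), k + d = m →
    ∀ u : Fin k → Fin m → F, LinearIndependent F u →
    ∃ TF : Matrix (Fin m) (Fin m) F, IsUnit TF.det ∧
      ∀ (i : Fin m) (hi : i.val < k), TF i = u ⟨i.val, hi⟩ := by
  intro d
  induction d with
  | zero =>
    intro k hk u hu
    subst hk
    refine ⟨Matrix.of (fun i => u ⟨i.val, by omega⟩), ?_, ?_⟩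
    · refine rows_basis_isUnit_det _ ?_
      have : (fun (i : Fin (k + 0)) => Matrix.of (fun i => u ⟨i.val, by omega⟩) i)
          = u ∘ (fun i : Fin (k + 0) => (⟨i.val, by omega⟩ : Fin k)) := rfl
      rw [this]
      refine hu.comp _ ?_
      intro x y hxy
      have : x.val = y.val := congrArg Fin.val hxy
      exact Fin.ext this
    · intro i hi
      rfl
  | succ d ih =>
    intro k hk u hu
    have hkm : k < m := by omega
    have hne : Submodule.span F (Set.range u) ≠ ⊤ := by
      intro htop
      have hb : Module.finrank F (Fin m → F) = k := by
        rw [Module.finrank_eq_card_basis (Module.Basis.mk hu (le_of_eq htop.symm))]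
        simp
      rw [Module.finrank_fin_fun] at hb
      omega
    obtain ⟨w, hw⟩ : ∃ w, w ∉ Submodule.span F (Set.range u) := by
      by_contra hcon
      push_neg at hcon
      exact hne (eq_top_iff.2 fun x _ => hcon x)
    have hu' : LinearIndependent F (Fin.snoc u w : Fin (k+1) → Fin m → F) :=
      linearIndependent_fin_snoc.2 ⟨hu, hw⟩
    obtain ⟨TF, hdet, hrows⟩ := ih (k+1) (by omega) (Fin.snoc u w) hu'
    refine ⟨TF, hdet, fun i hi => ?_⟩
    have hi' : i.val < k + 1 := Nat.lt_succ_of_lt hi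
    rw [hrows i hi']
    have h3 : (⟨i.val, hi'⟩ : Fin (k+1)) = Fin.castSucc ⟨i.val, hi⟩ := by
      ext
      simp
    rw [h3, Fin.snoc_castSucc]

lemma field_completion {k m : ℕ} (u : Fin k → Fin m → F) (hu : LinearIndependent F u) :
    ∃ TF : Matrix (Fin m) (Fin m) F, IsUnit TF.det ∧
      ∀ (i : Fin m) (hi : i.val < k), TF i = u ⟨i.val, hi⟩ := by
  have hkm : k ≤ m := by
    have := hu.fintype_card_le_finrank
    simpa [Module.finrank_fin_fun] using this
  exact field_completion_aux m (m - k) k (by omega) u hu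

end FieldCompletion
section Primes

open Matrix

variable {t : ℕ} {p s : Fin t → ℕ} {h : ℕ}

lemma zmod_isUnit_of_proj (hp : ∀ i, (p i).Prime) (hs : ∀ i, 1 ≤ s i)
    (hh : h = ∏ i, p i ^ s i) [NeZero h] (x : ZMod h)
    (hx : ∀ i, ((x.val : ℕ) : ZMod (p i)) ≠ 0) : IsUnit x := by
  subst hh
  have hcop : Nat.Coprime x.val (∏ i, p i ^ s i) := by
    refine Nat.coprime_prod_right_iff.2 fun i _ => ?_
    haveI : NeZero (p i) := ⟨(hp i).pos.ne'⟩
    have h1 : ¬ p i ∣ x.val := fun hd => hx i ((ZMod.natCast_eq_zero_iff _ _).2 hd)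
    have h2 : Nat.Coprime (p i) x.val := ((hp i).coprime_iff_not_dvd).2 h1
    exact (Nat.coprime_pow_right_iff (hs i) _ _).2 h2.symm
  have := (ZMod.isUnit_iff_coprime x.val _).2 hcop
  rwa [ZMod.natCast_rightInverse x] at this

lemma exists_idempotents (hp : ∀ i, (p i).Prime) (hs : ∀ i, 1 ≤ s i)
    (hpinj : Function.Injective p) (hh : h = ∏ i, p i ^ s i) [NeZero h] :
    ∃ e : Fin t → ZMod h,
      ∀ i j : Fin t, (((e j).val : ℕ) : ZMod (p i)) = if i = j then 1 else 0 := by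
  classical
  set q : Fin t → ℕ := fun i => p i ^ s i with hq
  have hqpos : ∀ i, 0 < q i := fun i => pow_pos (hp i).pos _
  have hpq : ∀ i, p i ∣ q i := fun i => dvd_pow_self _ (Nat.one_le_iff_ne_zero.1 (hs i))
  have hqdvd : ∀ i, q i ∣ h := fun i => hh ▸ Finset.dvd_prod_of_mem q (Finset.mem_univ i)
  have hpdvd : ∀ i, p i ∣ h := fun i => dvd_trans (hpq i) (hqdvd i)
  set nj : Fin t → ℕ := fun j => ∏ l ∈ Finset.univ.erase j, q l with hnj
  have hcop : ∀ j, Nat.Coprime (nj j) (q j) := by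
    intro j
    refine Nat.coprime_prod_left_iff.2 fun l hl => ?_
    have hlj : l ≠ j := (Finset.mem_erase.1 hl).1
    have hplj : Nat.Coprime (p l) (p j) := ((hp l).coprime_iff_not_dvd).2 fun hd =>
      hlj (hpinj ((Nat.prime_dvd_prime_iff_eq (hp l) (hp j)).1 hd))
    exact hplj.pow _ _
  refine ⟨fun j => ((nj j : ZMod h)) * (((((nj j : ZMod (q j)))⁻¹).val : ℕ) : ZMod h),
    fun i j => ?_⟩
  haveI : NeZero (p i) := ⟨(hp i).pos.ne'⟩
  haveI : NeZero (q j) := ⟨(hqpos j).ne'⟩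
  have hhom : ∀ (x : ZMod h), ((x.val : ℕ) : ZMod (p i))
      = ZMod.castHom (hpdvd i) (ZMod (p i)) x := fun x => by
    rw [ZMod.natCast_val, ZMod.castHom_apply]
  rw [hhom, _root_.map_mul, map_natCast]
  by_cases hij : i = j
  · subst hij
    have h2 : (ZMod.castHom (hpdvd i) (ZMod (p i)))
          ((((((nj i : ZMod (q i)))⁻¹).val : ℕ)) : ZMod h)
        = ZMod.castHom (hpq i) (ZMod (p i)) (((nj i : ZMod (q i)))⁻¹) := by
      rw [map_natCast, ZMod.natCast_val, ZMod.castHom_apply]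
    rw [h2]
    have h3 : ((nj i : ℕ) : ZMod (p i))
        = ZMod.castHom (hpq i) (ZMod (p i)) ((nj i : ZMod (q i))) := by
      rw [map_natCast]
    rw [h3, ← _root_.map_mul, ZMod.coe_mul_inv_eq_one (nj i) (hcop i), _root_.map_one, if_pos rfl]
  · have hdvd : p i ∣ nj j := dvd_trans (hpq i)
      (Finset.dvd_prod_of_mem q (Finset.mem_erase.2 ⟨hij, Finset.mem_univ i⟩))
    have : ((nj j : ℕ) : ZMod (p i)) = 0 := (ZMod.natCast_eq_zero_iff _ _).2 hdvd
    rw [this, zero_mul, if_neg hij]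

end Primes
section CompletionBound

open Matrix

variable {t : ℕ} {p s : Fin t → ℕ} {h : ℕ}

lemma completion_bound (ht : 1 ≤ t) (hp : ∀ i, (p i).Prime) (hs : ∀ i, 1 ≤ s i)
    (hpinj : Function.Injective p) (hh : h = ∏ i, p i ^ s i) [NeZero h]
    {m n k : ℕ} (M : Matrix (Fin m) (Fin n) (ZMod h))
    (u : Fin k → Fin m → ZMod h) (hu : Unimodular u)
    (hker : ∀ j, u j ᵥ* M = 0) : innerRank M + k ≤ m := by
  classical
  obtain ⟨U', hU'⟩ := hu
  have hpq : ∀ i, p i ∣ p i ^ s i := fun i => dvd_pow_self _ (Nat.one_le_iff_ne_zero.1 (hs i))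
  have hpdvd : ∀ i, p i ∣ h := fun i =>
    dvd_trans (hpq i) (hh ▸ Finset.dvd_prod_of_mem _ (Finset.mem_univ i))
  set φ : ∀ i : Fin t, ZMod h →+* ZMod (p i) :=
    fun i => ZMod.castHom (hpdvd i) (ZMod (p i)) with hφ
  have hval : ∀ (i : Fin t) (x : ZMod h), ((x.val : ℕ) : ZMod (p i)) = φ i x := fun i x => by
    rw [ZMod.natCast_val, hφ, ZMod.castHom_apply]
  haveI hFact : ∀ i, Fact (p i).Prime := fun i => ⟨hp i⟩
  set Ub : ∀ i : Fin t, Fin k → Fin m → ZMod (p i) :=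
    fun i j c => φ i (u j c) with hUb
  have hUbuni : ∀ i, Unimodular (Ub i) := by
    intro i
    refine ⟨Matrix.of (fun c j => φ i (U' c j)), ?_⟩
    ext j j'
    rw [Matrix.mul_apply]
    have : ∑ c, Matrix.of (Ub i) j c * Matrix.of (fun c j => φ i (U' c j)) c j'
        = φ i (∑ c, (Matrix.of u) j c * U' c j') := by
      rw [map_sum]
      exact Finset.sum_congr rfl fun c _ => by rw [_root_.map_mul]; rfl
    rw [this]
    have h2 : (∑ c, (Matrix.of u) j c * U' c j') = (Matrix.of u * U') j j' := by
      rw [Matrix.mul_apply]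
    rw [h2, hU']
    by_cases hjj : j = j'
    · simp [hjj, Matrix.one_apply]
    · simp [hjj, Matrix.one_apply]
  have hLI : ∀ i, LinearIndependent (ZMod (p i)) (Ub i) := fun i => unimodular_rows_li (hUbuni i)
  have hkm : k ≤ m := by
    have := (hLI ⟨0, ht⟩).fintype_card_le_finrank
    simpa [Module.finrank_fin_fun] using this
  have hTF := fun i => field_completion (Ub i) (hLI i)
  choose TF hdet hrow using hTF
  obtain ⟨e, he⟩ := exists_idempotents hp hs hpinj hh
  set T : Matrix (Fin m) (Fin m) (ZMod h) := Matrix.of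
    (fun (rr c : Fin m) => if hr : rr.val < k then u ⟨rr.val, hr⟩ c
      else ∑ i, e i * ((((TF i rr c).val : ℕ)) : ZMod h)) with hT
  have hmapT : ∀ i, T.map (φ i) = TF i := by
    intro i
    ext rr c
    rw [Matrix.map_apply]
    by_cases hr : rr.val < k
    · have h1 : T rr c = u ⟨rr.val, hr⟩ c := by rw [hT]; simp [hr]
      rw [h1]
      have h2 := hrow i rr hr
      have : TF i rr c = φ i (u ⟨rr.val, hr⟩ c) := by rw [h2]
      rw [this]
    · have h1 : T rr c = ∑ j, e j * ((((TF j rr c).val : ℕ)) : ZMod h) := by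
        rw [hT]; simp [hr]
      rw [h1, map_sum]
      have h2 : ∀ j, φ i (e j * ((((TF j rr c).val : ℕ)) : ZMod h))
          = (if i = j then 1 else 0) * (((TF j rr c).val : ℕ) : ZMod (p i)) := by
        intro j
        rw [_root_.map_mul, map_natCast, ← hval i (e j), he i j]
      rw [Finset.sum_congr rfl fun j _ => h2 j]
      rw [Finset.sum_eq_single i]
      · rw [if_pos rfl, one_mul, ZMod.natCast_val, ZMod.cast_id]
      · intro j _ hji
        rw [if_neg (Ne.symm hji), zero_mul]
      · intro hni
        exact absurd (Finset.mem_univ i) hni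
  have hdetne : ∀ i, ((T.det.val : ℕ) : ZMod (p i)) ≠ 0 := by
    intro i
    rw [hval i, RingHom.map_det, RingHom.mapMatrix_apply, hmapT i]
    exact (hdet i).ne_zero
  have hunit : IsUnit T.det := zmod_isUnit_of_proj hp hs hh T.det hdetne
  haveI := T.invertibleOfIsUnitDet hunit
  set S : Finset (Fin m) :=
    Finset.univ.map ⟨Fin.castLE hkm, Fin.castLE_injective hkm⟩ with hS
  have hscard : S.card = k := by simp [hS]
  have hkerS : ∀ i ∈ S, T i ᵥ* M = 0 := by
    intro i hi
    rw [hS, Finset.mem_map] at hi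
    obtain ⟨j, _, rfl⟩ := hi
    show T (Fin.castLE hkm j) ᵥ* M = 0
    have hlt : (Fin.castLE hkm j).val < k := j.isLt
    have hTj : T (Fin.castLE hkm j) = u j := by
      funext c
      rw [hT]
      simp only [Matrix.of_apply, dif_pos hlt]
      rfl
    rw [hTj]
    exact hker j
  have := innerRank_le_of_ker_rows M T (⅟T) (mul_invOf_self T) (invOf_mul_self T) S hkerS
  rw [hscard] at this
  omega

end CompletionBound
lemma mul_row {R : Type*} [CommRing R] {α β γ : ℕ} (X : Matrix (Fin α) (Fin β) R)
    (Y : Matrix (Fin β) (Fin γ) R) (i : Fin α) : (X * Y) i = X i ᵥ* Y := by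
  funext j
  simp [Matrix.mul_apply, Matrix.vecMul, dotProduct]

theorem stmt_6' (t : ℕ) (ht : 1 ≤ t) (p s : Fin t → ℕ)
    (hp : ∀ i, (p i).Prime) (hs : ∀ i, 1 ≤ s i) (hpinj : Function.Injective p)
    (h : ℕ) (hh : h = ∏ i, p i ^ s i)
    (a b n : ℕ)
    (A B : Submodule (ZMod h) (Fin n → ZMod h))
    (MA : Matrix (Fin a) (Fin n) (ZMod h)) (MB : Matrix (Fin b) (Fin n) (ZMod h))
    (hMA : HasRightInv MA ∧ rowSpace MA = A)
    (hMB : HasRightInv MB ∧ rowSpace MB = B)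
    (M : Matrix (Fin (a + b)) (Fin n) (ZMod h))
    (hM : M = Matrix.of (Fin.append (fun i => MA i) (fun i => MB i))) :
    joinDim A B = a + b - sdim (A ⊓ B) ∧ joinDim A B = innerRank M := by
  classical
  obtain ⟨⟨MA', hMA'⟩, hMAs⟩ := hMA
  obtain ⟨⟨MB', hMB'⟩, hMBs⟩ := hMB
  have h1h : 1 < h := by
    rw [hh]
    have h0 : (⟨0, ht⟩ : Fin t) ∈ Finset.univ := Finset.mem_univ _
    have h2 : 2 ≤ p ⟨0, ht⟩ ^ s ⟨0, ht⟩ := by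
      calc 2 ≤ p ⟨0, ht⟩ := (hp _).two_le
        _ ≤ p ⟨0, ht⟩ ^ s ⟨0, ht⟩ := Nat.le_self_pow (Nat.one_le_iff_ne_zero.1 (hs _)) _
    calc 1 < p ⟨0, ht⟩ ^ s ⟨0, ht⟩ := by omega
      _ ≤ ∏ i, p i ^ s i := Finset.single_le_prod' (fun i _ => Nat.one_le_iff_ne_zero.2
          (pow_ne_zero _ (hp i).pos.ne')) h0
  haveI : NeZero h := ⟨by omega⟩
  haveI : Fact (1 < h) := ⟨h1h⟩
  have hMrowA : ∀ i : Fin a, M (Fin.castAdd b i) = MA i := fun i => by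
    rw [hM]; exact Fin.append_left _ _ i
  have hMrowB : ∀ i : Fin b, M (Fin.natAdd a i) = MB i := fun i => by
    rw [hM]; exact Fin.append_right _ _ i
  have hjoin_ne : {d | ∃ W : Submodule (ZMod h) (Fin n → ZMod h),
      IsSubspaceOfDim n d W ∧ A ≤ W ∧ B ≤ W}.Nonempty :=
    ⟨n, ⊤, isSubspaceOfDim_top n, le_top, le_top⟩
  -- (1) innerRank M ≤ joinDim A B
  have hrd : innerRank M ≤ joinDim A B := by
    refine le_csInf hjoin_ne ?_
    rintro d' ⟨W, ⟨C, ⟨C', hC'⟩, hCW⟩, hAW, hBW⟩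
    have hrowW : ∀ i, M i ∈ rowSpace C := by
      intro i
      refine Fin.addCases (fun i' => ?_) (fun i' => ?_) i
      · rw [hMrowA i', hCW]
        exact hAW (hMAs ▸ row_mem_rowSpace MA i')
      · rw [hMrowB i', hCW]
        exact hBW (hMBs ▸ row_mem_rowSpace MB i')
    have hMCC : M = M * (C' * C) := by
      ext i l
      rw [mul_row, ← Matrix.vecMul_vecMul, vecMul_cancel_of_mem hC' (hrowW i)]
    exact innerRank_le M (M * C') C (by rw [Matrix.mul_assoc]; exact hMCC)
  -- (2) joinDim A B ≤ innerRank M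
  have hspec := innerRank_spec M
  set r0 := innerRank M with hr0
  clear_value r0
  obtain ⟨Bm, C, hBC⟩ := hspec
  have hdr : joinDim A B = r0 := by
    refine le_antisymm ?_ (hr0 ▸ hrd)
    obtain ⟨k2, hk2r, G, hG, hCG⟩ := cover_of_factor C
    have hMrows_inC : ∀ i, M i ∈ rowSpace C := fun i => by
      rw [hBC, mul_row]
      exact vecMul_mem_rowSpace _ _
    have hAW : A ≤ rowSpace G := by
      rw [← hMAs, rowSpace_le_iff]
      intro i
      exact hCG (by rw [← hMrowA i]; exact hMrows_inC _)
    have hBW : B ≤ rowSpace G := by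
      rw [← hMBs, rowSpace_le_iff]
      intro i
      exact hCG (by rw [← hMrowB i]; exact hMrows_inC _)
    have hdk : joinDim A B ≤ k2 := Nat.sInf_le ⟨rowSpace G, ⟨G, hG, rfl⟩, hAW, hBW⟩
    exact hdk.trans hk2r
  -- (3) innerRank M + sdim (A ⊓ B) ≤ a + b
  have hub : r0 + sdim (A ⊓ B) ≤ a + b := by
    obtain ⟨v, hvmem, hvuni⟩ := sdim_spec (A ⊓ B)
    set u : Fin (sdim (A ⊓ B)) → Fin (a + b) → ZMod h :=
      fun j => Fin.append (v j ᵥ* MA') (-(v j ᵥ* MB')) with hu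
    have e1 : ∀ j, (fun i => u j (Fin.castAdd b i)) = v j ᵥ* MA' := fun j =>
      funext fun i => by rw [hu]; exact Fin.append_left _ _ i
    have e2 : ∀ j, (fun i => u j (Fin.natAdd a i)) = -(v j ᵥ* MB') := fun j =>
      funext fun i => by rw [hu]; exact Fin.append_right _ _ i
    have hker : ∀ j, u j ᵥ* M = 0 := by
      intro j
      rw [hM, vecMul_append, e1, e2,
        vecMul_cancel_of_mem hMA' (hMAs ▸ (hvmem j).1),
        Matrix.neg_vecMul, vecMul_cancel_of_mem hMB' (hMBs ▸ (hvmem j).2)]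
      exact add_neg_cancel _
    have hUuni : Unimodular u := by
      obtain ⟨V', hV'⟩ := hvuni
      set NM : Matrix (Fin (a + b)) (Fin n) (ZMod h) :=
        Matrix.of (Fin.append (fun i => MA i)
          (fun i => (0 : Matrix (Fin b) (Fin n) (ZMod h)) i)) with hNM
      have h5 : Matrix.of u * NM = Matrix.of v := by
        ext j l
        rw [mul_row]
        show (u j ᵥ* NM) l = v j l
        have h6 : u j ᵥ* NM = v j := by
          rw [hNM, vecMul_append (u j) MA 0, e1, e2,
            vecMul_cancel_of_mem hMA' (hMAs ▸ (hvmem j).1), Matrix.vecMul_zero, add_zero]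
        rw [h6]
      exact ⟨NM * V', by rw [← Matrix.mul_assoc, h5, hV']⟩
    have := completion_bound ht hp hs hpinj hh M u hUuni hker
    omega
  -- (4) a + b ≤ innerRank M + sdim (A ⊓ B)
  have hlb : a + b ≤ r0 + sdim (A ⊓ B) := by
    obtain ⟨k4, hk4r, x, hxuni, hxker⟩ := leftker_unimodular Bm
    have hxM : ∀ j, x j ᵥ* M = 0 := fun j => by
      rw [hBC, ← Matrix.vecMul_vecMul, hxker j, Matrix.zero_vecMul]
    set xa : Fin (a + b - k4) → Fin a → ZMod h :=
      fun j => (fun i => x j (Fin.castAdd b i)) with hxa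
    set xb : Fin (a + b - k4) → Fin b → ZMod h :=
      fun j => (fun i => x j (Fin.natAdd a i)) with hxb
    set v4 : Fin (a + b - k4) → Fin n → ZMod h := fun j => xa j ᵥ* MA with hv4
    have hsum : ∀ j, xa j ᵥ* MA + xb j ᵥ* MB = 0 := by
      intro j
      have := hxM j
      rw [hM, vecMul_append] at this
      exact this
    have hv4B : ∀ j, v4 j = (-(xb j)) ᵥ* MB := by
      intro j
      rw [hv4, Matrix.neg_vecMul]
      have := hsum j
      have h6 : xa j ᵥ* MA = -(xb j ᵥ* MB) := by
        rw [eq_neg_iff_add_eq_zero]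
        exact this
      exact h6
    have hmemAB : ∀ j, v4 j ∈ A ⊓ B := by
      intro j
      constructor
      · exact hMAs ▸ vecMul_mem_rowSpace MA (xa j)
      · rw [hv4B j]
        exact hMBs ▸ vecMul_mem_rowSpace MB (-(xb j))
    have hv4uni : Unimodular v4 := by
      obtain ⟨X0, hX0⟩ := hxuni
      set G4 : Matrix (Fin n) (Fin (a + b)) (ZMod h) :=
        Matrix.of (fun i => Fin.append (fun l => MA' i l) (fun l => -(MB' i l))) with hG4
      have hvG : Matrix.of v4 * G4 = Matrix.of x := by
        ext j l
        rw [mul_row]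
        show (v4 j ᵥ* G4) l = x j l
        refine Fin.addCases (fun l' => ?_) (fun l' => ?_) l
        · have h7 : (v4 j ᵥ* G4) (Fin.castAdd b l') = (v4 j ᵥ* MA') l' := by
            simp only [Matrix.vecMul, dotProduct, hG4, Matrix.of_apply]
            exact Finset.sum_congr rfl fun i _ => by rw [Fin.append_left]
          rw [h7, hv4, Matrix.vecMul_vecMul, hMA', Matrix.vecMul_one]
        · have h7 : (v4 j ᵥ* G4) (Fin.natAdd a l') = -((v4 j ᵥ* MB') l') := by
            simp only [Matrix.vecMul, dotProduct, hG4, Matrix.of_apply]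
            rw [← Finset.sum_neg_distrib]
            exact Finset.sum_congr rfl fun i _ => by rw [Fin.append_right]; ring
          rw [h7, hv4B j, Matrix.vecMul_vecMul, hMB', Matrix.vecMul_one]
          show -((-(xb j)) l') = x j (Fin.natAdd a l')
          simp [hxb]
      have : Matrix.of v4 * (G4 * X0) = 1 := by rw [← Matrix.mul_assoc, hvG, hX0]
      exact ⟨G4 * X0, this⟩
    have hsd : a + b - k4 ≤ sdim (A ⊓ B) := le_sdim v4 hmemAB hv4uni
    omega
  refine ⟨?_, hdr⟩
  rw [hdr]
  omega

theorem stmt_6 (t : ℕ) (ht : 1 ≤ t) (p s : Fin t → ℕ)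
    (hp : ∀ i, (p i).Prime) (hs : ∀ i, 1 ≤ s i) (hpinj : Function.Injective p)
    (h : ℕ) (hh : h = ∏ i, p i ^ s i)
    (a b n : ℕ)
    (A B : Submodule (ZMod h) (Fin n → ZMod h))
    (MA : Matrix (Fin a) (Fin n) (ZMod h)) (MB : Matrix (Fin b) (Fin n) (ZMod h))
    (hMA : HasRightInv MA ∧ rowSpace MA = A)
    (hMB : HasRightInv MB ∧ rowSpace MB = B)
    (M : Matrix (Fin (a + b)) (Fin n) (ZMod h))
    (hM : M = Matrix.of (Fin.append (fun i => MA i) (fun i => MB i))) :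
    joinDim A B = a + b - sdim (A ⊓ B) ∧ joinDim A B = innerRank M := by
  exact stmt_6' t ht p s hp hs hpinj h hh a b n A B MA MB hMA hMB M hM

end Paper
end
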